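/- arXiv:1805.03625 — 2 statements merged into one kernel-verified Lean document; each statement's English description precedes it below -/
import Mathlib

section
/- Every transversal matroid is base-orderable: for any two bases B₁, B₂ of a transversal matroid M, there is a bijection π : B₁ → B₂ such that for every x ∈ B₁, both (B₁ \ {x}) ∪ {π(x)} and (B₂ \ {π(x)}) ∪ {x} are bases of M. -/
/-- `X` is a partial transversal of the family `A : J → Finset S`. -/
def PartialTransversal {S J : Type*} (A : J → Finset S) (X : Finset S) : Prop :=
  ∃ f : S → J, Set.InjOn f ↑X ∧ ∀ x ∈ X, x ∈ A (f x)

/-- A collection of bases is base-orderable if for any two bases `B₁, B₂` there is a bijection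
`π : B₁ → B₂` such that for each `x ∈ B₁`, both `(B₁ \ {x}) ∪ {π x}` and `(B₂ \ {π x}) ∪ {x}`
are bases. -/
def BaseOrderable {E : Type*} [DecidableEq E] (IsBase : Finset E → Prop) : Prop :=
  ∀ B₁ B₂, IsBase B₁ → IsBase B₂ → ∃ π : E → E, Set.BijOn π ↑B₁ ↑B₂ ∧
    ∀ x ∈ B₁, IsBase (insert (π x) (B₁.erase x)) ∧ IsBase (insert x (B₂.erase (π x)))

namespace Stmt7

open Finset

variable {S J : Type*} [Fintype S] [Fintype J] [DecidableEq S]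

set_option linter.unusedSectionVars false

open Classical in
noncomputable def nbr (A : J → Finset S) (K : Finset S) : Finset J :=
  Finset.univ.filter fun j => ∃ x ∈ K, x ∈ A j

lemma mem_nbr {A : J → Finset S} {K : Finset S} {j : J} :
    j ∈ nbr A K ↔ ∃ x ∈ K, x ∈ A j := by
  simp [nbr]

variable [DecidableEq J]

lemma nbr_mono {A : J → Finset S} {K K' : Finset S} (h : K ⊆ K') : nbr A K ⊆ nbr A K' := by
  intro j hj
  rw [mem_nbr] at hj ⊢
  obtain ⟨x, hx, hxa⟩ := hj
  exact ⟨x, h hx, hxa⟩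

lemma nbr_union {A : J → Finset S} (K K' : Finset S) :
    nbr A (K ∪ K') = nbr A K ∪ nbr A K' := by
  ext j
  simp only [mem_nbr, mem_union]
  constructor
  · rintro ⟨x, hx | hx, hxa⟩
    · exact Or.inl ⟨x, hx, hxa⟩
    · exact Or.inr ⟨x, hx, hxa⟩
  · rintro (⟨x, hx, hxa⟩ | ⟨x, hx, hxa⟩)
    · exact ⟨x, Or.inl hx, hxa⟩
    · exact ⟨x, Or.inr hx, hxa⟩

lemma nbr_empty {A : J → Finset S} : nbr A ∅ = ∅ := by
  ext j; simp [mem_nbr]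

lemma pt_card_le {A : J → Finset S} {X : Finset S} (hX : PartialTransversal A X)
    {K : Finset S} (hK : K ⊆ X) : K.card ≤ (nbr A K).card := by
  obtain ⟨f, hinj, hmem⟩ := hX
  have h1 : (K.image f).card = K.card :=
    Finset.card_image_of_injOn (hinj.mono (by exact_mod_cast hK))
  rw [← h1]
  apply Finset.card_le_card
  intro j hj
  rw [Finset.mem_image] at hj
  obtain ⟨x, hx, rfl⟩ := hj
  exact mem_nbr.2 ⟨x, hx, hmem x (hK hx)⟩

lemma pt_of_hall {A : J → Finset S} (f₀ : S → J) {X : Finset S}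
    (h : ∀ K ⊆ X, K.card ≤ (nbr A K).card) : PartialTransversal A X := by
  classical
  set t : {x // x ∈ X} → Finset J := fun x => nbr A {(x : S)} with ht
  have hall : ∀ s : Finset {x // x ∈ X}, s.card ≤ (s.biUnion t).card := by
    intro s
    have h1 : (s.image (Subtype.val)).card = s.card :=
      Finset.card_image_of_injective s Subtype.val_injective
    have h2 : s.biUnion t = nbr A (s.image Subtype.val) := by
      ext j
      simp only [Finset.mem_biUnion, mem_nbr, Finset.mem_image, ht, Finset.mem_singleton]
      constructor
      · rintro ⟨x, hx, y, rfl, hy⟩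
        exact ⟨x, ⟨x, hx, rfl⟩, hy⟩
      · rintro ⟨y, ⟨x, hx, rfl⟩, hy⟩
        exact ⟨x, hx, x, rfl, hy⟩
    rw [h2, ← h1]
    exact h _ (by intro y hy; rw [Finset.mem_image] at hy; obtain ⟨x, _, rfl⟩ := hy; exact x.2)
  obtain ⟨f, hfinj, hfmem⟩ := (Finset.all_card_le_biUnion_card_iff_exists_injective t).1 hall
  refine ⟨fun s => if h : s ∈ X then f ⟨s, h⟩ else f₀ s, ?_, ?_⟩
  · intro a ha b hb hab
    rw [Finset.mem_coe] at ha hb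
    simp only [dif_pos ha, dif_pos hb] at hab
    exact congrArg Subtype.val (hfinj hab)
  · intro x hx
    simp only [dif_pos hx]
    have := hfmem ⟨x, hx⟩
    rw [ht] at this
    simpa [mem_nbr] using this

lemma tight_union {A : J → Finset S} {X K K' : Finset S} (hX : PartialTransversal A X)
    (hK : K ⊆ X) (hK' : K' ⊆ X) (htK : (nbr A K).card = K.card)
    (htK' : (nbr A K').card = K'.card) : (nbr A (K ∪ K')).card = (K ∪ K').card := by
  have h1 : (nbr A K ∪ nbr A K').card + (nbr A K ∩ nbr A K').card
      = (nbr A K).card + (nbr A K').card := Finset.card_union_add_card_inter _ _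
  have h2 : nbr A (K ∩ K') ⊆ nbr A K ∩ nbr A K' := by
    intro j hj
    exact Finset.mem_inter.2 ⟨nbr_mono Finset.inter_subset_left hj,
      nbr_mono Finset.inter_subset_right hj⟩
  have h3 : (nbr A (K ∩ K')).card ≤ (nbr A K ∩ nbr A K').card := Finset.card_le_card h2
  have h4 : (K ∩ K').card ≤ (nbr A (K ∩ K')).card :=
    pt_card_le hX (Finset.inter_subset_left.trans hK)
  have h5 : (K ∪ K').card + (K ∩ K').card = K.card + K'.card :=
    Finset.card_union_add_card_inter _ _
  have h6 : (K ∪ K').card ≤ (nbr A (K ∪ K')).card := pt_card_le hX (Finset.union_subset hK hK')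
  have h7 : nbr A (K ∪ K') = nbr A K ∪ nbr A K' := nbr_union _ _
  rw [h7] at h6 ⊢
  omega

lemma aug {A : J → Finset S} {X Y : Finset S} (hX : PartialTransversal A X)
    (hY : PartialTransversal A Y) (h : X.card < Y.card) :
    ∃ y, y ∈ Y ∧ y ∉ X ∧ PartialTransversal A (insert y X) := by
  classical
  obtain ⟨f₀, -, -⟩ := id hX
  by_contra hcon
  push_neg at hcon
  have key : ∀ y : S, ∃ K, K ⊆ X ∧ (nbr A K).card = K.card ∧
      (y ∈ Y ∧ y ∉ X → nbr A {y} ⊆ nbr A K) := by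
    intro y
    by_cases hy : y ∈ Y ∧ y ∉ X
    · have hnpt := hcon y hy.1 hy.2
      have hnh : ¬ ∀ K ⊆ insert y X, K.card ≤ (nbr A K).card := fun hh => hnpt (pt_of_hall f₀ hh)
      push_neg at hnh
      obtain ⟨K, hKsub, hKcard⟩ := hnh
      have hyK : y ∈ K := by
        by_contra hyK
        have : K ⊆ X := by
          intro a ha
          rcases Finset.mem_insert.1 (hKsub ha) with rfl | h'
          · exact absurd ha hyK
          · exact h'
        exact absurd (pt_card_le hX this) (not_le.2 hKcard)
      set K' := K.erase y with hK'def
      have hK'X : K' ⊆ X := by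
        intro a ha
        have h1 := Finset.mem_erase.1 ha
        rcases Finset.mem_insert.1 (hKsub h1.2) with rfl | h'
        · exact absurd rfl h1.1
        · exact h'
      have hKeq : K = insert y K' := (Finset.insert_erase hyK).symm
      have hcardK : K.card = K'.card + 1 := by
        rw [hKeq, Finset.card_insert_of_notMem (Finset.notMem_erase _ _)]
      have hsplit : nbr A K = nbr A {y} ∪ nbr A K' := by
        rw [hKeq, Finset.insert_eq, nbr_union]
      have h1 : K'.card ≤ (nbr A K').card := pt_card_le hX hK'X
      have h2 : nbr A K' ⊆ nbr A {y} ∪ nbr A K' := Finset.subset_union_right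
      have h3 : (nbr A {y} ∪ nbr A K').card < K'.card + 1 := by
        rw [← hsplit, ← hcardK]; exact hKcard
      have h4 : nbr A {y} ∪ nbr A K' = nbr A K' :=
        (Finset.eq_of_subset_of_card_le h2 (by omega)).symm
      refine ⟨K', hK'X, ?_, fun _ => ?_⟩
      · have h5 : (nbr A K').card ≤ K'.card := by
          calc (nbr A K').card ≤ (nbr A {y} ∪ nbr A K').card := Finset.card_le_card h2
          _ ≤ K'.card := by omega
        omega
      · rw [← h4]; exact Finset.subset_union_left
    · exact ⟨∅, Finset.empty_subset _, by rw [nbr_empty]; simp, fun hy' => absurd hy' hy⟩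
  choose Kf hKf1 hKf2 hKf3 using key
  set Kstar := (Y \ X).biUnion Kf with hKstar
  have htight : ∀ s : Finset S, s.biUnion Kf ⊆ X ∧
      (nbr A (s.biUnion Kf)).card = (s.biUnion Kf).card := by
    intro s
    induction s using Finset.induction_on with
    | empty => simp [nbr_empty]
    | insert a s' ha ih =>
      rw [Finset.biUnion_insert]
      constructor
      · exact Finset.union_subset (hKf1 a) ih.1
      · exact tight_union hX (hKf1 a) ih.1 (hKf2 a) ih.2
  have hKstarX : Kstar ⊆ X := (htight _).1
  have hKstartight : (nbr A Kstar).card = Kstar.card := (htight _).2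
  set L := (Y ∩ Kstar) ∪ (Y \ X) with hL
  have hLY : L ⊆ Y :=
    Finset.union_subset Finset.inter_subset_left (Finset.sdiff_subset)
  have hNL : nbr A L ⊆ nbr A Kstar := by
    intro j hj
    obtain ⟨s, hs, hsa⟩ := mem_nbr.1 hj
    rcases Finset.mem_union.1 hs with hs1 | hs2
    · exact mem_nbr.2 ⟨s, (Finset.mem_inter.1 hs1).2, hsa⟩
    · have hsYX : s ∈ Y ∧ s ∉ X := by
        have := Finset.mem_sdiff.1 hs2; exact ⟨this.1, this.2⟩
      have h1 : nbr A {s} ⊆ nbr A (Kf s) := hKf3 s hsYX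
      have h2 : Kf s ⊆ Kstar := Finset.subset_biUnion_of_mem Kf hs2
      exact nbr_mono h2 (h1 (mem_nbr.2 ⟨s, Finset.mem_singleton_self s, hsa⟩))
  have hdisj : Disjoint (Y ∩ Kstar) (Y \ X) := by
    apply Finset.disjoint_left.2
    intro a ha ha'
    exact (Finset.mem_sdiff.1 ha').2 (hKstarX (Finset.mem_inter.1 ha).2)
  have hLcard : L.card = (Y ∩ Kstar).card + (Y \ X).card := Finset.card_union_of_disjoint hdisj
  have c1 : L.card ≤ (nbr A L).card := pt_card_le hY hLY
  have c2 : (nbr A L).card ≤ (nbr A Kstar).card := Finset.card_le_card hNL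
  have c3 : (Kstar ∩ Y).card + (Kstar \ Y).card = Kstar.card :=
    Finset.card_inter_add_card_sdiff _ _
  have c4 : (Y ∩ Kstar).card = (Kstar ∩ Y).card := by rw [Finset.inter_comm]
  have c5 : (Kstar \ Y).card ≤ (X \ Y).card :=
    Finset.card_le_card (Finset.sdiff_subset_sdiff hKstarX (le_refl _))
  have c6 : (Y ∩ X).card + (Y \ X).card = Y.card := Finset.card_inter_add_card_sdiff _ _
  have c7 : (X ∩ Y).card + (X \ Y).card = X.card := Finset.card_inter_add_card_sdiff _ _
  have c8 : (Y ∩ X).card = (X ∩ Y).card := by rw [Finset.inter_comm]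
  omega

lemma max_card {A : J → Finset S} {B T : Finset S} (hB : PartialTransversal A B)
    (hBmax : ∀ B' : Finset S, PartialTransversal A B' → B ⊆ B' → B = B')
    (hT : PartialTransversal A T) : T.card ≤ B.card := by
  by_contra hlt
  obtain ⟨y, _, hyB, hins⟩ := aug hB hT (not_le.1 hlt)
  exact hyB ((hBmax _ hins (Finset.subset_insert _ _)) ▸ Finset.mem_insert_self y B)

lemma base_of_card {A : J → Finset S} {B T : Finset S} (hB : PartialTransversal A B)
    (hBmax : ∀ B' : Finset S, PartialTransversal A B' → B ⊆ B' → B = B')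
    (hT : PartialTransversal A T) (hc : B.card ≤ T.card) :
    ∀ T', PartialTransversal A T' → T ⊆ T' → T = T' := by
  intro T' hT' hsub
  by_contra hne
  have h1 : T.card < T'.card := Finset.card_lt_card (Finset.ssubset_iff_subset_ne.2 ⟨hsub, hne⟩)
  exact absurd (max_card hB hBmax hT') (not_le.2 (lt_of_le_of_lt hc h1))

lemma pt_glue {A : J → Finset S} {X Y : Finset S} {f g : S → J}
    (hfX : Set.InjOn f ↑X) (hgY : Set.InjOn g ↑Y)
    (hfm : ∀ x ∈ X, x ∈ A (f x)) (hgm : ∀ y ∈ Y, y ∈ A (g y))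
    (hd : ∀ x ∈ X, ∀ y ∈ Y, f x ≠ g y) :
    PartialTransversal A (X ∪ Y) := by
  refine ⟨fun s => if s ∈ X then f s else g s, ?_, ?_⟩
  · intro a ha b hb hab
    dsimp only at hab
    rw [Finset.mem_coe, Finset.mem_union] at ha hb
    by_cases haX : a ∈ X <;> by_cases hbX : b ∈ X
    · rw [if_pos haX, if_pos hbX] at hab
      exact hfX haX hbX hab
    · rw [if_pos haX, if_neg hbX] at hab
      exact absurd hab (hd a haX b (hb.resolve_left hbX))
    · rw [if_neg haX, if_pos hbX] at hab
      exact absurd hab.symm (hd b hbX a (ha.resolve_left haX))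
    · rw [if_neg haX, if_neg hbX] at hab
      exact hgY (ha.resolve_left haX) (hb.resolve_left hbX) hab
  · intro s hs
    dsimp only
    by_cases hX : s ∈ X
    · rw [if_pos hX]; exact hfm s hX
    · rw [if_neg hX]
      exact hgm s ((Finset.mem_union.1 hs).resolve_left hX)

noncomputable def nxt (C : Finset S) (g f : S → J) : S → S := fun x =>
  if h : ∃ y ∈ C, g y = f x then h.choose else x

lemma nxt_spec {C : Finset S} {g f : S → J} {x : S} (h : ∃ y ∈ C, g y = f x) :
    nxt C g f x ∈ C ∧ g (nxt C g f x) = f x := by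
  rw [nxt, dif_pos h]
  exact ⟨h.choose_spec.1, h.choose_spec.2⟩

noncomputable def uwalk (C : Finset S) (g f : S → J) (x : S) : ℕ → S :=
  fun i => (nxt C g f)^[i] x

lemma uwalk_zero {C : Finset S} {g f : S → J} {x : S} : uwalk C g f x 0 = x := rfl

lemma uwalk_succ {C : Finset S} {g f : S → J} {x : S} {i : ℕ} :
    uwalk C g f x (i + 1) = nxt C g f (uwalk C g f x i) :=
  Function.iterate_succ_apply' _ _ _

lemma exit_unique {B : Finset S} {v : ℕ → S} {m₁ m₂ : ℕ}
    (h₁ : (∀ i < m₁, v i ∈ B) ∧ v m₁ ∉ B)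
    (h₂ : (∀ i < m₂, v i ∈ B) ∧ v m₂ ∉ B) : m₁ = m₂ := by
  rcases lt_trichotomy m₁ m₂ with h | h | h
  · exact absurd (h₂.1 _ h) h₁.2
  · exact h
  · exact absurd (h₁.1 _ h) h₂.2

open Classical in
noncomputable def wend (B C : Finset S) (g f : S → J) : S → S := fun x =>
  if h : ∃ m, (∀ i < m, uwalk C g f x i ∈ B) ∧ uwalk C g f x m ∉ B
  then uwalk C g f x h.choose else x

theorem wend_main {A : J → Finset S} {B C : Finset S} {f g : S → J}
    (hf : Set.InjOn f ↑B) (hfm : ∀ x ∈ B, x ∈ A (f x))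
    (hg : Set.InjOn g ↑C) (hgm : ∀ y ∈ C, y ∈ A (g y))
    (hCmax : ∀ T, PartialTransversal A T → C ⊆ T → C = T)
    {x₀ : S} (hx₀B : x₀ ∈ B) (hx₀C : x₀ ∉ C) :
    wend B C g f x₀ ∈ C ∧ wend B C g f x₀ ∉ B ∧
      PartialTransversal A (insert (wend B C g f x₀) (B.erase x₀)) ∧
      PartialTransversal A (insert x₀ (C.erase (wend B C g f x₀))) ∧
      wend C B f g (wend B C g f x₀) = x₀ := by
  classical
  have hu0 : (uwalk C g f x₀) 0 = x₀ := uwalk_zero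
  -- no-stuck lemma
  have keylem : ∀ i, (∀ k ≤ i, (uwalk C g f x₀) k ∈ B) →
      (∀ k, 0 < k → k ≤ i → (uwalk C g f x₀) k ∈ C ∧ g ((uwalk C g f x₀) k) = f ((uwalk C g f x₀) (k-1))) →
      ∃ y ∈ C, g y = f ((uwalk C g f x₀) i) := by
    intro i hpre hsteps
    by_contra hstuck
    set Q : Finset S := (Finset.range (i+1)).image (uwalk C g f x₀) with hQdef
    set Pp : Finset S := (Finset.Icc 1 i).image (uwalk C g f x₀) with hPpdef
    have hQB : (↑Q : Set S) ⊆ ↑B := by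
      intro a ha
      rw [Finset.mem_coe, hQdef, Finset.mem_image] at ha
      obtain ⟨k, hk, rfl⟩ := ha
      exact hpre k (Nat.lt_succ_iff.1 (Finset.mem_range.1 hk))
    have hPpC : (↑Pp : Set S) ⊆ ↑C := by
      intro a ha
      rw [Finset.mem_coe, hPpdef, Finset.mem_image] at ha
      obtain ⟨k, hk, rfl⟩ := ha
      have hk' := Finset.mem_Icc.1 hk
      exact (hsteps k hk'.1 hk'.2).1
    have hseteq : insert x₀ C = Q ∪ (C \ Pp) := by
      ext s
      constructor
      · intro hs
        rcases Finset.mem_insert.1 hs with rfl | hsC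
        · refine Finset.mem_union_left _ ?_
          rw [hQdef, Finset.mem_image]
          exact ⟨0, Finset.mem_range.2 (Nat.succ_pos i), hu0⟩
        · by_cases hsP : s ∈ Pp
          · rw [hPpdef, Finset.mem_image] at hsP
            obtain ⟨k, hk, rfl⟩ := hsP
            have hk' := Finset.mem_Icc.1 hk
            refine Finset.mem_union_left _ ?_
            rw [hQdef, Finset.mem_image]
            exact ⟨k, Finset.mem_range.2 (by omega), rfl⟩
          · exact Finset.mem_union_right _ (Finset.mem_sdiff.2 ⟨hsC, hsP⟩)
      · intro hs
        rcases Finset.mem_union.1 hs with hsQ | hsC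
        · rw [hQdef, Finset.mem_image] at hsQ
          obtain ⟨k, hk, rfl⟩ := hsQ
          have hk' := Finset.mem_range.1 hk
          rcases Nat.eq_zero_or_pos k with rfl | hkpos
          · rw [hu0]; exact Finset.mem_insert_self _ _
          · exact Finset.mem_insert_of_mem (hsteps k hkpos (by omega)).1
        · exact Finset.mem_insert_of_mem (Finset.mem_sdiff.1 hsC).1
    have hd : ∀ q ∈ Q, ∀ c ∈ C \ Pp, f q ≠ g c := by
      intro q hq c hc heq
      rw [hQdef, Finset.mem_image] at hq
      obtain ⟨k, hk, rfl⟩ := hq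
      have hk' := Finset.mem_range.1 hk
      have hcC : c ∈ C := (Finset.mem_sdiff.1 hc).1
      rcases Nat.lt_or_ge k i with hki | hki
      · have hstep := hsteps (k+1) (Nat.succ_pos k) (by omega)
        have hstep2 : g ((uwalk C g f x₀) (k+1)) = f ((uwalk C g f x₀) k) := by
          have := hstep.2
          simpa using this
        have hceq : c = (uwalk C g f x₀) (k+1) := hg hcC hstep.1 (by rw [← heq, hstep2])
        have : c ∈ Pp := by
          rw [hPpdef, Finset.mem_image]
          exact ⟨k+1, Finset.mem_Icc.2 ⟨Nat.succ_pos k, by omega⟩, hceq.symm⟩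
        exact (Finset.mem_sdiff.1 hc).2 this
      · have hki2 : k = i := by omega
        subst hki2
        exact hstuck ⟨c, hcC, heq.symm⟩
    have hPT : PartialTransversal A (Q ∪ (C \ Pp)) :=
      pt_glue (hf.mono hQB) (hg.mono (by intro a ha; exact (Finset.mem_sdiff.1 ha).1))
        (fun x hx => hfm x (hQB hx)) (fun y hy => hgm y (Finset.mem_sdiff.1 hy).1) hd
    rw [← hseteq] at hPT
    have hCeq := hCmax _ hPT (Finset.subset_insert _ _)
    exact hx₀C (by rw [hCeq]; exact Finset.mem_insert_self x₀ C)
  -- steps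
  have steps : ∀ i, (∀ k ≤ i, (uwalk C g f x₀) k ∈ B) →
      ∀ k, 0 < k → k ≤ i + 1 → (uwalk C g f x₀) k ∈ C ∧ g ((uwalk C g f x₀) k) = f ((uwalk C g f x₀) (k-1)) := by
    intro i
    induction i with
    | zero =>
      intro hpre k hk0 hk1
      have hk : k = 1 := by omega
      subst hk
      have hns : ∃ y ∈ C, g y = f ((uwalk C g f x₀) 0) :=
        keylem 0 hpre (by intro k hk0 hki; exact absurd hki (by omega))
      have hsp := nxt_spec hns
      have h1eq : (uwalk C g f x₀) 1 = nxt C g f ((uwalk C g f x₀) 0) := uwalk_succ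
      rw [h1eq]
      exact ⟨hsp.1, hsp.2⟩
    | succ i ih =>
      intro hpre k hk0 hk1
      have hpre' : ∀ k ≤ i, (uwalk C g f x₀) k ∈ B := fun k hk => hpre k (by omega)
      by_cases hk : k ≤ i + 1
      · exact ih hpre' k hk0 hk
      · have hk2 : k = i + 2 := by omega
        subst hk2
        have hns : ∃ y ∈ C, g y = f ((uwalk C g f x₀) (i+1)) := keylem (i+1) hpre (ih hpre')
        have hsp := nxt_spec hns
        have h1eq : (uwalk C g f x₀) (i+2) = nxt C g f ((uwalk C g f x₀) (i+1)) := uwalk_succ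
        rw [h1eq]
        refine ⟨hsp.1, ?_⟩
        have : (i + 2) - 1 = i + 1 := by omega
        rw [this]
        exact hsp.2
  -- termination
  have hex : ∃ m, (uwalk C g f x₀) m ∉ B := by
    by_contra hall
    push_neg at hall
    have hstepsall : ∀ k, 0 < k → (uwalk C g f x₀) k ∈ C ∧ g ((uwalk C g f x₀) k) = f ((uwalk C g f x₀) (k-1)) := by
      intro k hk0
      exact steps k (fun k' _ => hall k') k hk0 (by omega)
    have haux : ∀ a, ∀ b, a < b → (uwalk C g f x₀) a ≠ (uwalk C g f x₀) b := by
      intro a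
      induction a with
      | zero =>
        intro b hb heq
        have h1 : (uwalk C g f x₀) b ∈ C := (hstepsall b hb).1
        rw [← heq, hu0] at h1
        exact hx₀C h1
      | succ a ih =>
        intro b hb heq
        have hb1 : 0 < b := by omega
        have h1 := hstepsall (a+1) (Nat.succ_pos a)
        have h2 := hstepsall b hb1
        have h12 : g ((uwalk C g f x₀) (a+1)) = f ((uwalk C g f x₀) a) := by
          have := h1.2
          simpa using this
        have h4 : f ((uwalk C g f x₀) a) = f ((uwalk C g f x₀) (b-1)) := by
          rw [← h12, heq, h2.2]
        have h5 : (uwalk C g f x₀) a = (uwalk C g f x₀) (b-1) := hf (hall a) (hall (b-1)) h4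
        exact ih (b-1) (by omega) h5
    obtain ⟨a, b, hab, heq⟩ := Finite.exists_ne_map_eq_of_infinite (uwalk C g f x₀)
    rcases lt_trichotomy a b with h | h | h
    · exact haux a b h heq
    · exact hab h
    · exact haux b a h heq.symm
  set m := Nat.find hex with hmdef
  have hmB : (uwalk C g f x₀) m ∉ B := Nat.find_spec hex
  have hpre : ∀ i < m, (uwalk C g f x₀) i ∈ B := fun i hi => not_not.1 (Nat.find_min hex hi)
  have hm0 : 0 < m := by
    rcases Nat.eq_zero_or_pos m with h | h
    · rw [h] at hmB
      rw [hu0] at hmB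
      exact absurd hx₀B hmB
    · exact h
  have hsteps : ∀ k, 0 < k → k ≤ m → (uwalk C g f x₀) k ∈ C ∧ g ((uwalk C g f x₀) k) = f ((uwalk C g f x₀) (k-1)) := by
    intro k hk0 hkm
    exact steps (m-1) (fun k' hk' => hpre k' (by omega)) k hk0 (by omega)
  have hwend : wend B C g f x₀ = (uwalk C g f x₀) m := by
    have hexP : ∃ n, (∀ i < n, (uwalk C g f x₀) i ∈ B) ∧ (uwalk C g f x₀) n ∉ B := ⟨m, hpre, hmB⟩
    rw [wend]
    rw [dif_pos hexP]
    have hch := hexP.choose_spec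
    have hcm : hexP.choose = m := exit_unique hch ⟨hpre, hmB⟩
    rw [hcm]
  rw [hwend]
  have hymC : (uwalk C g f x₀) m ∈ C := (hsteps m hm0 le_rfl).1
  -- back walk
  have back : ∀ i, i ≤ m → (uwalk B f g ((uwalk C g f x₀) m)) i = (uwalk C g f x₀) (m - i) := by
    intro i
    induction i with
    | zero =>
      intro _
      rw [Nat.sub_zero]
      exact uwalk_zero
    | succ i ih =>
      intro hi
      have hi' : i ≤ m := by omega
      have h1 : (uwalk B f g ((uwalk C g f x₀) m)) (i+1) = nxt B f g ((uwalk B f g ((uwalk C g f x₀) m)) i) := uwalk_succ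
      rw [h1, ih hi']
      have hk := hsteps (m-i) (by omega) (by omega)
      have hmem : (uwalk C g f x₀) (m-i-1) ∈ B := hpre _ (by omega)
      have hexw : ∃ w ∈ B, f w = g ((uwalk C g f x₀) (m-i)) := ⟨(uwalk C g f x₀) (m-i-1), hmem, hk.2.symm⟩
      have hsp := nxt_spec (C := B) (g := f) (f := g) hexw
      have hfeq : f (nxt B f g ((uwalk C g f x₀) (m-i))) = f ((uwalk C g f x₀) (m-i-1)) := by rw [hsp.2, hk.2]
      have heqw : nxt B f g ((uwalk C g f x₀) (m-i)) = (uwalk C g f x₀) (m-i-1) := hf hsp.1 hmem hfeq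
      have hidx : m - i - 1 = m - (i+1) := by omega
      rw [heqw, hidx]
  -- sets Q and Pp for the exchange
  set Q : Finset S := (Finset.range m).image (uwalk C g f x₀) with hQdef
  set Pp : Finset S := (Finset.Icc 1 m).image (uwalk C g f x₀) with hPpdef
  have hQB : (↑Q : Set S) ⊆ ↑B := by
    intro a ha
    rw [Finset.mem_coe, hQdef, Finset.mem_image] at ha
    obtain ⟨k, hk, rfl⟩ := ha
    exact hpre k (Finset.mem_range.1 hk)
  have hPpC : (↑Pp : Set S) ⊆ ↑C := by
    intro a ha
    rw [Finset.mem_coe, hPpdef, Finset.mem_image] at ha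
    obtain ⟨k, hk, rfl⟩ := ha
    have hk' := Finset.mem_Icc.1 hk
    exact (hsteps k hk'.1 hk'.2).1
  have humem : (uwalk C g f x₀) m ∈ Pp := by
    rw [hPpdef, Finset.mem_image]
    exact ⟨m, Finset.mem_Icc.2 ⟨hm0, le_rfl⟩, rfl⟩
  have hx0Q : x₀ ∈ Q := by
    rw [hQdef, Finset.mem_image]
    exact ⟨0, Finset.mem_range.2 hm0, hu0⟩
  -- exchange (a)
  have hseteq_a : insert ((uwalk C g f x₀) m) (B.erase x₀) = (B \ Q) ∪ Pp := by
    ext s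
    constructor
    · intro hs
      rcases Finset.mem_insert.1 hs with rfl | hsB
      · exact Finset.mem_union_right _ humem
      · obtain ⟨hsne, hsB'⟩ := Finset.mem_erase.1 hsB
        by_cases hsQ : s ∈ Q
        · rw [hQdef, Finset.mem_image] at hsQ
          obtain ⟨k, hk, rfl⟩ := hsQ
          have hk' := Finset.mem_range.1 hk
          have hkpos : 0 < k := by
            rcases Nat.eq_zero_or_pos k with rfl | h
            · exact absurd hu0 hsne
            · exact h
          refine Finset.mem_union_right _ ?_
          rw [hPpdef, Finset.mem_image]
          exact ⟨k, Finset.mem_Icc.2 ⟨hkpos, by omega⟩, rfl⟩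
        · exact Finset.mem_union_left _ (Finset.mem_sdiff.2 ⟨hsB', hsQ⟩)
    · intro hs
      rcases Finset.mem_union.1 hs with hsB | hsP
      · obtain ⟨hsB', hsQ⟩ := Finset.mem_sdiff.1 hsB
        by_cases hse : s = (uwalk C g f x₀) m
        · rw [hse]; exact Finset.mem_insert_self _ _
        · refine Finset.mem_insert_of_mem (Finset.mem_erase.2 ⟨?_, hsB'⟩)
          intro hse2
          rw [hse2] at hsQ
          exact hsQ hx0Q
      · rw [hPpdef, Finset.mem_image] at hsP
        obtain ⟨k, hk, rfl⟩ := hsP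
        have hk' := Finset.mem_Icc.1 hk
        rcases Nat.eq_or_lt_of_le hk'.2 with hkm | hkm
        · rw [hkm]; exact Finset.mem_insert_self _ _
        · refine Finset.mem_insert_of_mem (Finset.mem_erase.2 ⟨?_, hpre k hkm⟩)
          intro hse
          exact hx₀C (hse ▸ (hsteps k hk'.1 hk'.2).1)
  have hd_a : ∀ q ∈ B \ Q, ∀ p ∈ Pp, f q ≠ g p := by
    intro q hq p hp heq
    rw [hPpdef, Finset.mem_image] at hp
    obtain ⟨k, hk, rfl⟩ := hp
    have hk' := Finset.mem_Icc.1 hk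
    have hstep := hsteps k hk'.1 hk'.2
    obtain ⟨hqB, hqQ⟩ := Finset.mem_sdiff.1 hq
    have hmem : (uwalk C g f x₀) (k-1) ∈ B := hpre _ (by omega)
    have hqeq : q = (uwalk C g f x₀) (k-1) := hf hqB hmem (by rw [heq, hstep.2])
    apply hqQ
    rw [hQdef, Finset.mem_image]
    exact ⟨k-1, Finset.mem_range.2 (by omega), hqeq.symm⟩
  have hPTa : PartialTransversal A (insert ((uwalk C g f x₀) m) (B.erase x₀)) := by
    rw [hseteq_a]
    exact pt_glue (hf.mono (by intro a ha; exact (Finset.mem_sdiff.1 ha).1))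
      (hg.mono hPpC) (fun x hx => hfm x (Finset.mem_sdiff.1 hx).1)
      (fun y hy => hgm y (hPpC hy)) hd_a
  -- exchange (b)
  have hseteq_b : insert x₀ (C.erase ((uwalk C g f x₀) m)) = Q ∪ (C \ Pp) := by
    ext s
    constructor
    · intro hs
      rcases Finset.mem_insert.1 hs with rfl | hsC
      · exact Finset.mem_union_left _ hx0Q
      · obtain ⟨hsne, hsC'⟩ := Finset.mem_erase.1 hsC
        by_cases hsP : s ∈ Pp
        · rw [hPpdef, Finset.mem_image] at hsP
          obtain ⟨k, hk, rfl⟩ := hsP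
          have hk' := Finset.mem_Icc.1 hk
          have hkm : k < m := by
            rcases Nat.eq_or_lt_of_le hk'.2 with h | h
            · rw [h] at hsne; exact absurd rfl hsne
            · exact h
          refine Finset.mem_union_left _ ?_
          rw [hQdef, Finset.mem_image]
          exact ⟨k, Finset.mem_range.2 hkm, rfl⟩
        · exact Finset.mem_union_right _ (Finset.mem_sdiff.2 ⟨hsC', hsP⟩)
    · intro hs
      rcases Finset.mem_union.1 hs with hsQ | hsC
      · rw [hQdef, Finset.mem_image] at hsQ
        obtain ⟨k, hk, rfl⟩ := hsQ
        have hk' := Finset.mem_range.1 hk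
        rcases Nat.eq_zero_or_pos k with rfl | hkpos
        · rw [hu0]; exact Finset.mem_insert_self _ _
        · refine Finset.mem_insert_of_mem (Finset.mem_erase.2 ⟨?_, (hsteps k hkpos (by omega)).1⟩)
          intro hse
          have : (uwalk C g f x₀) m ∈ B := by rw [← hse]; exact hpre k hk'
          exact hmB this
      · obtain ⟨hsC', hsP⟩ := Finset.mem_sdiff.1 hsC
        refine Finset.mem_insert_of_mem (Finset.mem_erase.2 ⟨?_, hsC'⟩)
        intro hse
        rw [hse] at hsP
        exact hsP humem
  have hd_b : ∀ q ∈ Q, ∀ c ∈ C \ Pp, f q ≠ g c := by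
    intro q hq c hc heq
    rw [hQdef, Finset.mem_image] at hq
    obtain ⟨k, hk, rfl⟩ := hq
    have hk' := Finset.mem_range.1 hk
    have hstep := hsteps (k+1) (Nat.succ_pos k) (by omega)
    have hstep2 : g ((uwalk C g f x₀) (k+1)) = f ((uwalk C g f x₀) k) := by
      have := hstep.2
      simpa using this
    have hcC : c ∈ C := (Finset.mem_sdiff.1 hc).1
    have hceq : c = (uwalk C g f x₀) (k+1) := hg hcC hstep.1 (by rw [← heq, hstep2])
    apply (Finset.mem_sdiff.1 hc).2
    rw [hPpdef, Finset.mem_image]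
    exact ⟨k+1, Finset.mem_Icc.2 ⟨Nat.succ_pos k, by omega⟩, hceq.symm⟩
  have hPTb : PartialTransversal A (insert x₀ (C.erase ((uwalk C g f x₀) m))) := by
    rw [hseteq_b]
    exact pt_glue (hf.mono hQB) (hg.mono (by intro a ha; exact (Finset.mem_sdiff.1 ha).1))
      (fun x hx => hfm x (hQB hx)) (fun y hy => hgm y (Finset.mem_sdiff.1 hy).1) hd_b
  -- reverse wend
  have hrev : wend C B f g ((uwalk C g f x₀) m) = x₀ := by
    have hexP2 : ∃ n, (∀ i < n, (uwalk B f g ((uwalk C g f x₀) m)) i ∈ C) ∧ (uwalk B f g ((uwalk C g f x₀) m)) n ∉ C := by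
      refine ⟨m, ?_, ?_⟩
      · intro i hi
        rw [back i (le_of_lt hi)]
        exact (hsteps (m-i) (by omega) (by omega)).1
      · rw [back m le_rfl, Nat.sub_self, hu0]
        exact hx₀C
    rw [wend]
    rw [dif_pos hexP2]
    have hch := hexP2.choose_spec
    have hcm : hexP2.choose = m := exit_unique hch ⟨fun i hi => by rw [back i (le_of_lt hi)]; exact (hsteps (m-i) (by omega) (by omega)).1, by rw [back m le_rfl, Nat.sub_self, hu0]; exact hx₀C⟩
    rw [hcm, back m le_rfl, Nat.sub_self, hu0]
  exact ⟨hymC, hmB, hPTa, hPTb, hrev⟩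
end Stmt7

/-- Every transversal matroid (the matroid on `S` whose independent sets are the
partial transversals of a finite family of subsets of `S`, whose bases are the maximal partial
transversals) is base-orderable. -/
theorem stmt7 {S J : Type*} [Fintype S] [Fintype J] [DecidableEq S] (A : J → Finset S) :
    BaseOrderable (fun B : Finset S => PartialTransversal A B ∧
      ∀ B' : Finset S, PartialTransversal A B' → B ⊆ B' → B = B') := by
  classical
  intro B₁ B₂ hB₁ hB₂
  obtain ⟨hPT₁, hmax₁⟩ := hB₁
  obtain ⟨hPT₂, hmax₂⟩ := hB₂
  obtain ⟨f₁, hf₁, hf₁m⟩ := id hPT₁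
  obtain ⟨f₂, hf₂, hf₂m⟩ := id hPT₂
  have W := fun (x : S) (hx : x ∈ B₁) (hx2 : x ∉ B₂) =>
    Stmt7.wend_main hf₁ hf₁m hf₂ hf₂m hmax₂ hx hx2
  have W' := fun (y : S) (hy : y ∈ B₂) (hy1 : y ∉ B₁) =>
    Stmt7.wend_main hf₂ hf₂m hf₁ hf₁m hmax₁ hy hy1
  refine ⟨fun x => if x ∈ B₁ ∧ x ∉ B₂ then Stmt7.wend B₁ B₂ f₂ f₁ x else x, ⟨?_, ?_, ?_⟩, ?_⟩
  · -- MapsTo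
    intro x hx
    rw [Finset.mem_coe] at hx
    dsimp only
    by_cases hx2 : x ∈ B₂
    · rw [if_neg (fun hc => hc.2 hx2)]
      exact hx2
    · rw [if_pos ⟨hx, hx2⟩]
      exact (W x hx hx2).1
  · -- InjOn
    intro a ha b hb hab
    rw [Finset.mem_coe] at ha hb
    dsimp only at hab
    by_cases ha2 : a ∈ B₂ <;> by_cases hb2 : b ∈ B₂
    · rw [if_neg (fun hc => hc.2 ha2), if_neg (fun hc => hc.2 hb2)] at hab
      exact hab
    · rw [if_neg (fun hc => hc.2 ha2), if_pos ⟨hb, hb2⟩] at hab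
      exact absurd (hab ▸ ha) (W b hb hb2).2.1
    · rw [if_pos ⟨ha, ha2⟩, if_neg (fun hc => hc.2 hb2)] at hab
      exact absurd (hab ▸ hb) (W a ha ha2).2.1
    · rw [if_pos ⟨ha, ha2⟩, if_pos ⟨hb, hb2⟩] at hab
      have h1 := (W a ha ha2).2.2.2.2
      rw [hab] at h1
      rw [← h1, (W b hb hb2).2.2.2.2]
  · -- SurjOn
    intro y hy
    rw [Finset.mem_coe] at hy
    by_cases hy1 : y ∈ B₁
    · refine ⟨y, hy1, ?_⟩
      dsimp only
      rw [if_neg (fun hc => hc.2 hy)]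
    · obtain ⟨hx1, hx2, -, -, hback⟩ := W' y hy hy1
      refine ⟨Stmt7.wend B₂ B₁ f₁ f₂ y, hx1, ?_⟩
      dsimp only
      rw [if_pos ⟨hx1, hx2⟩]
      exact hback
  · -- exchange
    intro x hx
    dsimp only
    by_cases hx2 : x ∈ B₂
    · rw [if_neg (fun hc => hc.2 hx2)]
      constructor
      · rw [Finset.insert_erase hx]
        exact ⟨hPT₁, hmax₁⟩
      · rw [Finset.insert_erase hx2]
        exact ⟨hPT₂, hmax₂⟩
    · obtain ⟨hyC, hyB, hPTa, hPTb, -⟩ := W x hx hx2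
      rw [if_pos ⟨hx, hx2⟩]
      constructor
      · refine ⟨hPTa, Stmt7.base_of_card hPT₁ hmax₁ hPTa ?_⟩
        rw [Finset.card_insert_of_notMem (fun hc => hyB (Finset.mem_of_mem_erase hc)),
            Finset.card_erase_of_mem hx]
        have hpos : 0 < B₁.card := Finset.card_pos.2 ⟨x, hx⟩
        omega
      · refine ⟨hPTb, Stmt7.base_of_card hPT₂ hmax₂ hPTb ?_⟩
        rw [Finset.card_insert_of_notMem (fun hc => hx2 (Finset.mem_of_mem_erase hc)),
            Finset.card_erase_of_mem hyC]
        have hpos : 0 < B₂.card := Finset.card_pos.2 ⟨_, hyC⟩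
        omega
end

section
/- Every gammoid is base-orderable. -/
/-- `Linked Adj B X` : `X` can be linked into `B` in the directed graph with adjacency `Adj`
by pairwise vertex-disjoint directed paths. -/
def Linked {V : Type*} (Adj : V → V → Prop) (B : Set V) (X : Set V) : Prop :=
  ∃ P : X → List V,
    (∀ x : X, (P x).Chain' Adj ∧ (P x).Nodup ∧ (P x).head? = some x.1 ∧
      ∃ y ∈ B, (P x).getLast? = some y) ∧
    ∀ x x' : V, ∀ hx : x ∈ X, ∀ hx' : x' ∈ X, x ≠ x' →
      ∀ v ∈ P ⟨x, hx⟩, v ∉ P ⟨x', hx'⟩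

set_option linter.unusedSectionVars false
set_option maxHeartbeats 1000000

namespace Stmt8
section ListPart
variable {V : Type*}



/-- next element after `v` in list `l`. -/
def nIL [DecidableEq V] : List V → V → Option V
  | [], _ => none
  | a :: rest, v => if a = v then rest.head? else nIL rest v

variable [DecidableEq V]

lemma nIL_mem {l : List V} {v u : V} (hl : nIL l v = some u) : v ∈ l := by
  induction l with
  | nil => simp [nIL] at hl
  | cons a rest ih =>
    by_cases hav : a = v
    · simp [hav]
    · simp only [nIL, if_neg hav] at hl
      exact List.mem_cons_of_mem _ (ih hl)

lemma nIL_tail {l : List V} {v u : V} (hl : nIL l v = some u) : u ∈ l.tail := by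
  induction l with
  | nil => simp [nIL] at hl
  | cons a rest ih =>
    by_cases hav : a = v
    · simp only [nIL, if_pos hav] at hl
      simpa using List.mem_of_mem_head? hl
    · simp only [nIL, if_neg hav] at hl
      exact List.mem_of_mem_tail (ih hl)

lemma nIL_mem_snd {l : List V} {v u : V} (hl : nIL l v = some u) : u ∈ l :=
  List.mem_of_mem_tail (nIL_tail hl)

lemma nIL_adj {Adj : V → V → Prop} {l : List V} (hc : l.Chain' Adj) {v u : V}
    (hl : nIL l v = some u) : Adj v u := by
  induction l with
  | nil => simp [nIL] at hl
  | cons a rest ih =>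
    by_cases hav : a = v
    · simp only [nIL, if_pos hav] at hl
      subst hav
      cases rest with
      | nil => simp at hl
      | cons b t =>
        simp at hl
        subst hl
        exact (List.isChain_cons_cons.1 hc).1
    · simp only [nIL, if_neg hav] at hl
      exact ih hc.tail hl

lemma nIL_not_mem {l : List V} {v : V} (hv : v ∉ l) : nIL l v = none := by
  induction l with
  | nil => rfl
  | cons a rest ih =>
    simp only [List.mem_cons, not_or] at hv
    simp only [nIL, if_neg (Ne.symm hv.1 : ¬ a = v)]
    exact ih hv.2

lemma nIL_none_last {l : List V} {v : V} (hv : v ∈ l) (hl : nIL l v = none) :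
    l.getLast? = some v := by
  induction l with
  | nil => simp at hv
  | cons a rest ih =>
    by_cases hav : a = v
    · simp only [nIL, if_pos hav] at hl
      have : rest = [] := by
        cases rest with
        | nil => rfl
        | cons b t => simp at hl
      subst this; subst hav; rfl
    · simp only [nIL, if_neg hav] at hl
      have hvr : v ∈ rest := by
        rcases List.mem_cons.1 hv with h | h
        · exact absurd h.symm hav
        · exact h
      cases rest with
      | nil => simp at hvr
      | cons b t =>
        rw [List.getLast?_cons_cons]
        exact ih hvr hl

lemma nIL_head_not {l : List V} (hnd : l.Nodup) {v u : V} (hl : nIL l v = some u) :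
    l.head? ≠ some u := by
  cases l with
  | nil => simp [nIL] at hl
  | cons a rest =>
    have := nIL_tail hl
    simp only [List.tail_cons] at this
    simp only [List.head?_cons]
    intro hau
    obtain rfl : a = u := by injection hau
    exact (List.nodup_cons.1 hnd).1 this

lemma nIL_inj {l : List V} (hnd : l.Nodup) {v v' u : V}
    (h1 : nIL l v = some u) (h2 : nIL l v' = some u) : v = v' := by
  induction l with
  | nil => simp [nIL] at h1
  | cons a rest ih =>
    by_cases hav : a = v <;> by_cases hav' : a = v'
    · rw [← hav, ← hav']
    · -- v = a, v' in rest
      exfalso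
      simp only [nIL, if_pos hav] at h1
      simp only [nIL, if_neg hav'] at h2
      have hut : u ∈ rest.tail := nIL_tail h2
      cases rest with
      | nil => simp at h1
      | cons b t =>
        simp at h1
        subst h1
        exact (List.nodup_cons.1 (List.nodup_cons.1 hnd).2).1 (by simpa using hut)
    · exfalso
      simp only [nIL, if_pos hav'] at h2
      simp only [nIL, if_neg hav] at h1
      have hut : u ∈ rest.tail := nIL_tail h1
      cases rest with
      | nil => simp at h2
      | cons b t =>
        simp at h2
        subst h2
        exact (List.nodup_cons.1 (List.nodup_cons.1 hnd).2).1 (by simpa using hut)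
    · simp only [nIL, if_neg hav] at h1
      simp only [nIL, if_neg hav'] at h2
      exact ih (List.nodup_cons.1 hnd).2 h1 h2

lemma nIL_pred {l : List V} (hnd : l.Nodup) {v : V} (hv : v ∈ l)
    (hh : l.head? ≠ some v) : ∃ u, nIL l u = some v := by
  induction l with
  | nil => simp at hv
  | cons a rest ih =>
    have hva : ¬ a = v := by
      intro h; exact hh (by simp [h])
    have hvr : v ∈ rest := by
      rcases List.mem_cons.1 hv with h | h
      · exact absurd h.symm hva
      · exact h
    by_cases hr : rest.head? = some v
    · exact ⟨a, by simp [nIL, hr]⟩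
    · obtain ⟨u, hu⟩ := ih (List.nodup_cons.1 hnd).2 hvr hr
      have hua : ¬ a = u := by
        rintro rfl
        exact (List.nodup_cons.1 hnd).1 (nIL_mem hu)
      exact ⟨u, by simp [nIL, if_neg hua, hu]⟩


end ListPart


variable {V : Type*} [Fintype V] [DecidableEq V]

section MkLink

variable {Adj : V → V → Prop} {B₀ : Finset V} {g : V → Option V} {W : V → Prop}

/-- iteration step -/
noncomputable def gstep (g : V → Option V) (v : V) : V := (g v).getD v

lemma gstep_some {g : V → Option V} {v u : V} (h : g v = some u) : gstep g v = u := by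
  simp [gstep, h]

lemma gstep_none {g : V → Option V} {v : V} (h : g v = none) : gstep g v = v := by
  simp [gstep, h]

/-- key injectivity/disjointness of iterated orbits from non-image sources -/
lemma cross (hinj : ∀ v v' u, g v = some u → g v' = some u → v = v')
    {z z' : V} (hz : ∀ v, g v ≠ some z) (hz' : ∀ v, g v ≠ some z') :
    ∀ i j, (∀ k < i, g ((gstep g)^[k] z) ≠ none) → (∀ k < j, g ((gstep g)^[k] z') ≠ none) →
      (gstep g)^[i] z = (gstep g)^[j] z' → z = z' ∧ i = j := by
  intro i
  induction i with
  | zero =>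
    intro j _ hj heq
    cases j with
    | zero => exact ⟨heq, rfl⟩
    | succ j =>
      exfalso
      rw [Function.iterate_succ_apply'] at heq
      have hne := hj j (Nat.lt_succ_self j)
      obtain ⟨u, hu⟩ := Option.ne_none_iff_exists'.1 hne
      rw [gstep_some hu] at heq
      exact hz _ (heq ▸ hu)
  | succ i ih =>
    intro j hi hj heq
    cases j with
    | zero =>
      exfalso
      rw [Function.iterate_succ_apply'] at heq
      have hne := hi i (Nat.lt_succ_self i)
      obtain ⟨u, hu⟩ := Option.ne_none_iff_exists'.1 hne
      rw [gstep_some hu] at heq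
      exact hz' _ (heq ▸ hu)
    | succ j =>
      rw [Function.iterate_succ_apply', Function.iterate_succ_apply'] at heq
      have hne := hi i (Nat.lt_succ_self i)
      have hne' := hj j (Nat.lt_succ_self j)
      obtain ⟨u, hu⟩ := Option.ne_none_iff_exists'.1 hne
      obtain ⟨u', hu'⟩ := Option.ne_none_iff_exists'.1 hne'
      rw [gstep_some hu, gstep_some hu'] at heq
      subst heq
      have := hinj _ _ _ hu hu'
      obtain ⟨h1, h2⟩ := ih j (fun k hk => hi k (Nat.lt_succ_of_lt hk))
        (fun k hk => hj k (Nat.lt_succ_of_lt hk)) this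
      exact ⟨h1, by omega⟩

lemma orbit_terminates (hinj : ∀ v v' u, g v = some u → g v' = some u → v = v')
    {z : V} (hz : ∀ v, g v ≠ some z) : ∃ n, g ((gstep g)^[n] z) = none := by
  by_contra hcon
  push_neg at hcon
  have : Fintype.card V < Fintype.card (Fin (Fintype.card V + 1)) := by simp
  obtain ⟨a, b, hab, heq⟩ := Fintype.exists_ne_map_eq_of_card_lt
    (fun n : Fin (Fintype.card V + 1) => (gstep g)^[n.1] z) this
  rcases Nat.lt_or_ge a.1 b.1 with hlt | hge
  · have := (cross hinj hz hz a.1 b.1 (fun k _ => hcon _) (fun k _ => hcon _) heq).2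
    omega
  · have hne : a.1 ≠ b.1 := fun hc => hab (Fin.ext hc)
    have := (cross hinj hz hz a.1 b.1 (fun k _ => hcon _) (fun k _ => hcon _) heq).2
    exact hne this

/-- Build a `Linked` certificate from a functional linkage. -/
lemma linked_of_fun (Adj : V → V → Prop) (B₀ : Finset V) (Z : Finset V)
    (g : V → Option V) (W : V → Prop)
    (hadj : ∀ v u, g v = some u → Adj v u)
    (hinj : ∀ v v' u, g v = some u → g v' = some u → v = v')
    (hWs : ∀ v, W v → ∀ u, g v = some u → W u)
    (hWt : ∀ v, W v → g v = none → v ∈ B₀)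
    (hZ : ∀ z ∈ Z, W z ∧ ∀ v, g v ≠ some z) :
    Linked Adj ↑B₀ ↑Z := by
  classical
  -- N z : minimal terminal index (defined for sources)
  have hterm : ∀ z ∈ Z, ∃ n, g ((gstep g)^[n] z) = none := fun z hz =>
    orbit_terminates hinj (hZ z hz).2
  set It : V → ℕ → V := fun z n => (gstep g)^[n] z with hIt
  have hWit : ∀ z, W z → ∀ n, W (It z n) := by
    intro z hWz n
    induction n with
    | zero => exact hWz
    | succ n ihn =>
      show W ((gstep g)^[n+1] z)
      rw [Function.iterate_succ_apply']
      cases hgv : g (It z n) with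
      | none => rw [gstep_none hgv]; exact ihn
      | some u => rw [gstep_some hgv]; exact hWs _ ihn _ hgv
  refine ⟨fun z => (List.range (Nat.find (hterm z.1 (by exact_mod_cast z.2)) + 1)).map
      (fun n => It z.1 n), ?_, ?_⟩
  · rintro ⟨z, hz⟩
    have hzZ : z ∈ Z := by exact_mod_cast hz
    set N := Nat.find (hterm z hzZ) with hN
    have hNone : g (It z N) = none := Nat.find_spec (hterm z hzZ)
    have hLt : ∀ k < N, g (It z k) ≠ none := fun k hk => Nat.find_min (hterm z hzZ) hk
    refine ⟨?_, ?_, ?_, ?_⟩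
    · show List.IsChain Adj (List.map _ _)
      rw [List.isChain_map]
      rw [List.isChain_range_succ]
      intro m hm
      obtain ⟨u, hu⟩ := Option.ne_none_iff_exists'.1 (hLt m hm)
      have : It z (m+1) = u := by
        show (gstep g)^[m+1] z = u
        rw [Function.iterate_succ_apply']; exact gstep_some hu
      rw [this]
      exact hadj _ _ hu
    · refine List.Nodup.map_on ?_ List.nodup_range
      intro a ha b hb heq
      simp only [List.mem_range] at ha hb
      exact (cross hinj (hZ z hzZ).2 (hZ z hzZ).2 a b
        (fun k hk => hLt k (by omega)) (fun k hk => hLt k (by omega)) heq).2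
    · have : (0:ℕ) < N + 1 := Nat.succ_pos N
      rw [List.head?_map]
      have : (List.range (N + 1)).head? = some 0 := by
        rw [List.range_succ_eq_map]; rfl
      rw [this]
      rfl
    · refine ⟨It z N, ?_, ?_⟩
      · exact_mod_cast hWt _ (hWit z (hZ z hzZ).1 N) hNone
      · show (List.map (fun n => It z n) (List.range (N+1))).getLast? = some (It z N)
        rw [List.range_succ, List.map_append]
        simp
  · intro z z' hz hz' hne v hv hv'
    simp only [List.mem_map, List.mem_range] at hv hv'
    obtain ⟨i, hi, hiv⟩ := hv
    obtain ⟨j, hj, hjv⟩ := hv'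
    have hzZ : z ∈ Z := by exact_mod_cast hz
    have hzZ' : z' ∈ Z := by exact_mod_cast hz'
    have := (cross hinj (hZ z hzZ).2 (hZ z' hzZ').2 i j
      (fun k hk => Nat.find_min (hterm z hzZ) (by omega))
      (fun k hk => Nat.find_min (hterm z' hzZ') (by omega))
      (hiv.trans hjv.symm)).1
    exact hne this

end MkLink

/-- Functional presentation of a linkage of the set `X` into `B₀`. -/
structure Route (Adj : V → V → Prop) (B₀ : Finset V) (X : Finset V)
    (f : V → Option V) (S : Set V) : Prop where
  adj : ∀ v u, f v = some u → Adj v u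
  inj : ∀ v v' u, f v = some u → f v' = some u → v = v'
  dom : ∀ v, f v ≠ none → v ∈ S
  closed : ∀ v u, v ∈ S → f v = some u → u ∈ S
  srcs : ∀ x ∈ X, (x : V) ∈ S
  sink : ∀ v ∈ S, f v = none → v ∈ B₀
  nimg : ∀ x ∈ X, ∀ v, f v ≠ some x
  orig : ∀ v ∈ S, v ∈ X ∨ ∃ u, f u = some v

lemma route_of_linked {Adj : V → V → Prop} {B₀ : Finset V} {X : Finset V}
    (hL : Linked Adj ↑B₀ ↑X) : ∃ f S, Route Adj B₀ X f S := by
  classical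
  obtain ⟨P, hP, hdisj⟩ := hL
  -- uniqueness of the containing path
  have UNIQ : ∀ (a b : (↑X : Set V)) (v : V), v ∈ P a → v ∈ P b → a = b := by
    rintro ⟨a, ha⟩ ⟨b, hb⟩ v hva hvb
    by_contra hne
    have hab : a ≠ b := fun hc => hne (by simpa using hc)
    exact hdisj a b ha hb hab v hva hvb
  have hmemx : ∀ a : (↑X : Set V), (a : V) ∈ P a := by
    intro a
    have := (hP a).2.2.1
    cases hl : P a with
    | nil => rw [hl] at this; simp at this
    | cons c t => rw [hl] at this; simp at this; simp [hl, this]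
  set S : Set V := {v | ∃ a : (↑X : Set V), v ∈ P a} with hS
  set f : V → Option V := fun v =>
    if h : ∃ a : (↑X : Set V), v ∈ P a then nIL (P h.choose) v else none with hf
  have FEQ : ∀ (a : (↑X : Set V)) (v : V), v ∈ P a → f v = nIL (P a) v := by
    intro a v hv
    have hex : ∃ a : (↑X : Set V), v ∈ P a := ⟨a, hv⟩
    have : hex.choose = a := UNIQ _ _ v hex.choose_spec hv
    simp only [hf]; rw [dif_pos hex, this]
  have FSOME : ∀ v u, f v = some u → ∃ a : (↑X : Set V), v ∈ P a ∧ u ∈ P a ∧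
      f v = nIL (P a) v := by
    intro v u hvu
    simp only [hf] at hvu
    by_cases hex : ∃ a : (↑X : Set V), v ∈ P a
    · rw [dif_pos hex] at hvu
      exact ⟨hex.choose, hex.choose_spec, nIL_mem_snd hvu,
        FEQ _ _ hex.choose_spec⟩
    · rw [dif_neg hex] at hvu; exact absurd hvu (by simp)
  refine ⟨f, S, ?_, ?_, ?_, ?_, ?_, ?_, ?_, ?_⟩
  · -- adj
    intro v u hvu
    obtain ⟨a, hva, hua, he⟩ := FSOME v u hvu
    exact nIL_adj (hP a).1 (he ▸ hvu)
  · -- inj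
    intro v v' u hv hv'
    obtain ⟨a, hva, hua, he⟩ := FSOME v u hv
    obtain ⟨b, hvb, hub, he'⟩ := FSOME v' u hv'
    obtain rfl : a = b := UNIQ a b u hua hub
    exact nIL_inj (hP a).2.1 (he ▸ hv) (he' ▸ hv')
  · -- dom
    intro v hv
    simp only [hf] at hv
    by_cases hex : ∃ a : (↑X : Set V), v ∈ P a
    · exact hex
    · rw [dif_neg hex] at hv; simp at hv
  · -- closed
    intro v u hvS hvu
    obtain ⟨a, hva, hua, he⟩ := FSOME v u hvu
    exact ⟨a, hua⟩
  · -- srcs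
    intro a ha
    exact ⟨⟨a, by exact_mod_cast ha⟩, hmemx _⟩
  · -- sink
    intro v hvS hvnone
    obtain ⟨a, hva⟩ := hvS
    have := FEQ a v hva
    rw [hvnone] at this
    have hlast := nIL_none_last hva this.symm
    obtain ⟨y, hy, hy'⟩ := (hP a).2.2.2
    rw [hlast] at hy'
    obtain rfl : y = v := by injection hy'.symm
    exact_mod_cast hy
  · -- nimg
    intro a ha v hvc
    obtain ⟨b, hvb, hab, he⟩ := FSOME v a hvc
    have hax : (⟨a, by exact_mod_cast ha⟩ : (↑X : Set V)) = b :=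
      UNIQ _ _ a (hmemx _) hab
    have hhead : (P b).head? = some a := by
      rw [← hax]; exact (hP _).2.2.1
    exact nIL_head_not (hP b).2.1 (he ▸ hvc) hhead
  · -- orig
    intro v hvS
    obtain ⟨a, hva⟩ := hvS
    by_cases hh : (P a).head? = some v
    · left
      have := (hP a).2.2.1
      rw [hh] at this
      obtain rfl : v = a := by injection this
      exact_mod_cast a.2
    · right
      obtain ⟨u, hu⟩ := nIL_pred (hP a).2.1 hva hh
      have huPa : u ∈ P a := nIL_mem hu
      exact ⟨u, (FEQ a u huPa).trans hu⟩



section Core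

variable {V : Type*} [Fintype V] [DecidableEq V]
variable {Adj : V → V → Prop} {B₀ : Finset V} {X Y : Finset V}
variable {f h : V → Option V} {Sf Sh : Set V} {x : V}

/-- the exchange-walk step relation -/
def EStep (f h : V → Option V) (Sf Sh : Set V) (u v : V) : Prop :=
  (∃ w, f u = some w ∧ h v = some w) ∨ (f u = some v ∧ v ∉ Sh) ∨ (h v = some u ∧ u ∉ Sf)

noncomputable def seed (h : V → Option V) (x : V) : V :=
  if hc : ∃ w, h w = some x then hc.choose else x

def Mset (f h : V → Option V) (Sf Sh : Set V) (x : V) : Set V :=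
  {v | Relation.ReflTransGen (EStep f h Sf Sh) (seed h x) v}

def DefSpec (f h : V → Option V) (Sf Sh : Set V) (Y : Finset V) (x y : V) : Prop :=
  ∃ w, w ∈ Mset f h Sf Sh x ∧
    ((f w = some y ∧ y ∈ Y) ∨ (w = y ∧ y ∈ Y ∧ y ∉ Sf))

def DeadOut (f h : V → Option V) (Sf Sh : Set V) (w : V) : Prop :=
  ∀ u, ¬ EStep f h Sf Sh w u

lemma img_mem (hf : Route Adj B₀ X f Sf) {v u : V} (hv : f v = some u) : u ∈ Sf :=
  hf.closed v u (hf.dom v (by simp [hv])) hv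

lemma dom_mem (hf : Route Adj B₀ X f Sf) {v u : V} (hv : f v = some u) : v ∈ Sf :=
  hf.dom v (by simp [hv])

lemma not_mem_dom (hf : Route Adj B₀ X f Sf) {v : V} (hv : v ∉ Sf) : f v = none := by
  by_contra hc
  exact hv (hf.dom v hc)

lemma seed_some (hc : ∃ w, h w = some x) : h (seed h x) = some x := by
  rw [seed, dif_pos hc]; exact hc.choose_spec

lemma seed_none (hc : ¬ ∃ w, h w = some x) : seed h x = x := dif_neg hc

lemma seed_mem : seed h x ∈ Mset f h Sf Sh x := Relation.ReflTransGen.refl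

lemma x_not_Sh (hh : Route Adj B₀ Y h Sh) (hxY : x ∉ Y) (hc : ¬ ∃ w, h w = some x) :
    x ∉ Sh := by
  intro hxSh
  rcases hh.orig x hxSh with hY | hw
  · exact hxY hY
  · exact hc hw

lemma no_in_seed (hf : Route Adj B₀ X f Sf) (hh : Route Adj B₀ Y h Sh)
    (hx : x ∈ X) (hxY : x ∉ Y) : ∀ u, ¬ EStep f h Sf Sh u (seed h x) := by
  intro u hE
  by_cases hc : ∃ w, h w = some x
  · have hs : h (seed h x) = some x := seed_some hc
    rcases hE with ⟨w, hfu, hhv⟩ | ⟨hfu, hnSh⟩ | ⟨hhv, hnSf⟩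
    · rw [hs] at hhv
      obtain rfl : x = w := by injection hhv
      exact hf.nimg _ hx u hfu
    · exact hnSh (hh.dom _ (by simp [hs]))
    · rw [hs] at hhv
      obtain rfl : x = u := by injection hhv
      exact hnSf (hf.srcs _ hx)
  · rw [seed_none hc] at hE
    have hxSh : x ∉ Sh := x_not_Sh hh hxY hc
    rcases hE with ⟨w, hfu, hhv⟩ | ⟨hfu, hnSh⟩ | ⟨hhv, hnSf⟩
    · exact hxSh (hh.dom _ (by simp [hhv]))
    · exact hf.nimg x hx u hfu
    · exact hxSh (hh.dom _ (by simp [hhv]))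

lemma out_unique (hf : Route Adj B₀ X f Sf) (hh : Route Adj B₀ Y h Sh) {u v v' : V}
    (h1 : EStep f h Sf Sh u v) (h2 : EStep f h Sf Sh u v') : v = v' := by
  rcases h1 with ⟨w, hfu, hhv⟩ | ⟨hfu, hnSh⟩ | ⟨hhv, hnSf⟩ <;>
    rcases h2 with ⟨w', hfu', hhv'⟩ | ⟨hfu', hnSh'⟩ | ⟨hhv', hnSf'⟩
  · obtain rfl : w = w' := by rw [hfu] at hfu'; injection hfu'
    exact hh.inj _ _ _ hhv hhv'
  · obtain rfl : w = v' := by rw [hfu] at hfu'; injection hfu'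
    exact absurd (img_mem hh hhv) hnSh'
  · exact absurd (dom_mem hf hfu) hnSf'
  · obtain rfl : v = w' := by rw [hfu] at hfu'; injection hfu'
    exact absurd (img_mem hh hhv') hnSh
  · rw [hfu] at hfu'; injection hfu'
  · exact absurd (dom_mem hf hfu) hnSf'
  · exact absurd (dom_mem hf hfu') hnSf
  · exact absurd (dom_mem hf hfu') hnSf
  · exact hh.inj _ _ _ hhv hhv'

lemma in_unique (hf : Route Adj B₀ X f Sf) (hh : Route Adj B₀ Y h Sh) {u u' v : V}
    (h1 : EStep f h Sf Sh u v) (h2 : EStep f h Sf Sh u' v) : u = u' := by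
  rcases h1 with ⟨w, hfu, hhv⟩ | ⟨hfu, hnSh⟩ | ⟨hhv, hnSf⟩ <;>
    rcases h2 with ⟨w', hfu', hhv'⟩ | ⟨hfu', hnSh'⟩ | ⟨hhv', hnSf'⟩
  · obtain rfl : w = w' := by rw [hhv] at hhv'; injection hhv'
    exact hf.inj _ _ _ hfu hfu'
  · exact absurd (dom_mem hh hhv) hnSh'
  · obtain rfl : w = u' := by rw [hhv] at hhv'; injection hhv'
    exact absurd (img_mem hf hfu) hnSf'
  · exact absurd (dom_mem hh hhv') hnSh
  · exact hf.inj _ _ _ hfu hfu'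
  · exact absurd (dom_mem hh hhv') hnSh
  · obtain rfl : u = w' := by rw [hhv] at hhv'; injection hhv'
    exact absurd (img_mem hf hfu') hnSf
  · exact absurd (dom_mem hh hhv) hnSh'
  · rw [hhv] at hhv'; injection hhv'

lemma M_fwd {v u : V} (hv : v ∈ Mset f h Sf Sh x) (hE : EStep f h Sf Sh v u) :
    u ∈ Mset f h Sf Sh x := Relation.ReflTransGen.tail hv hE

lemma M_bwd (hf : Route Adj B₀ X f Sf) (hh : Route Adj B₀ Y h Sh)
    (hx : x ∈ X) (hxY : x ∉ Y) {v u : V}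
    (hv : v ∈ Mset f h Sf Sh x) (hE : EStep f h Sf Sh u v) :
    u ∈ Mset f h Sf Sh x := by
  rcases Relation.ReflTransGen.cases_tail hv with rfl | ⟨c, hc, hcv⟩
  · exact absurd hE (no_in_seed hf hh hx hxY u)
  · rwa [in_unique hf hh hE hcv]

lemma reach2 {α : Type*} {r : α → α → Prop}
    (hru : ∀ a b c, r a b → r a c → b = c) {a b c : α}
    (hab : Relation.ReflTransGen r a b) (hac : Relation.ReflTransGen r a c) :
    Relation.ReflTransGen r b c ∨ Relation.ReflTransGen r c b := by
  induction hab with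
  | refl => exact Or.inl hac
  | @tail b' b hab' hstep ih =>
    rcases ih with hride | hride
    · rcases hride.cases_head with rfl | ⟨d, hd, hdc⟩
      · exact Or.inr (Relation.ReflTransGen.single hstep)
      · obtain rfl : d = b := hru _ _ _ hd hstep
        exact Or.inl hdc
    · exact Or.inr (hride.tail hstep)

lemma rev2 {α : Type*} {r : α → α → Prop}
    (hlu : ∀ a b c, r a c → r b c → a = b) {a b c : α}
    (hac : Relation.ReflTransGen r a c) (hbc : Relation.ReflTransGen r b c) :
    Relation.ReflTransGen r a b ∨ Relation.ReflTransGen r b a := by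
  have h1 : Relation.ReflTransGen (Function.swap r) c a := Relation.reflTransGen_swap.2 hac
  have h2 : Relation.ReflTransGen (Function.swap r) c b := Relation.reflTransGen_swap.2 hbc
  rcases reach2 (r := Function.swap r) (fun p q s hq hs => hlu q s p hq hs) h1 h2 with hr | hr
  · exact Or.inr (Relation.reflTransGen_swap.1 hr)
  · exact Or.inl (Relation.reflTransGen_swap.1 hr)

lemma head_unique (hf : Route Adj B₀ X f Sf) (hh : Route Adj B₀ Y h Sh) {w₁ w₂ : V}
    (h1 : w₁ ∈ Mset f h Sf Sh x) (h2 : w₂ ∈ Mset f h Sf Sh x)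
    (hd1 : DeadOut f h Sf Sh w₁) (hd2 : DeadOut f h Sf Sh w₂) : w₁ = w₂ := by
  have h1' : Relation.ReflTransGen (EStep f h Sf Sh) (seed h x) w₁ := h1
  have h2' : Relation.ReflTransGen (EStep f h Sf Sh) (seed h x) w₂ := h2
  rcases reach2 (r := EStep f h Sf Sh) (fun a b c hb hc => out_unique hf hh hb hc) h1' h2' with hr | hr
  · rcases hr.cases_head with rfl | ⟨d, hd, _⟩
    · rfl
    · exact absurd hd (hd1 d)
  · rcases hr.cases_head with rfl | ⟨d, hd, _⟩
    · rfl
    · exact absurd hd (hd2 d)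

lemma head_ex (hf : Route Adj B₀ X f Sf) (hh : Route Adj B₀ Y h Sh)
    (hx : x ∈ X) (hxY : x ∉ Y) :
    ∃ w, w ∈ Mset f h Sf Sh x ∧ DeadOut f h Sf Sh w := by
  classical
  set F : V → V := fun v => if hc : ∃ u, EStep f h Sf Sh v u then hc.choose else v with hF
  have hFM : ∀ n, F^[n] (seed h x) ∈ Mset f h Sf Sh x := by
    intro n
    induction n with
    | zero => exact seed_mem
    | succ n ih =>
      rw [Function.iterate_succ_apply']
      by_cases hc : ∃ u, EStep f h Sf Sh (F^[n] (seed h x)) u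
      · have : F (F^[n] (seed h x)) = hc.choose := by simp only [hF]; rw [dif_pos hc]
        rw [this]
        exact M_fwd ih hc.choose_spec
      · have : F (F^[n] (seed h x)) = F^[n] (seed h x) := by simp only [hF]; rw [dif_neg hc]
        rw [this]; exact ih
  by_contra hcon
  push_neg at hcon
  have halive : ∀ n, ∃ u, EStep f h Sf Sh (F^[n] (seed h x)) u := by
    intro n
    by_contra hc
    push_neg at hc
    exact hcon _ (hFM n) hc
  have hstep : ∀ n, EStep f h Sf Sh (F^[n] (seed h x)) (F^[n+1] (seed h x)) := by
    intro n
    rw [Function.iterate_succ_apply']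
    have hc := halive n
    have : F (F^[n] (seed h x)) = hc.choose := by simp only [hF]; rw [dif_pos hc]
    rw [this]
    exact hc.choose_spec
  -- injectivity of the iterates
  have hinj : ∀ i j, i < j → F^[i] (seed h x) ≠ F^[j] (seed h x) := by
    intro i
    induction i with
    | zero =>
      intro j hj heq
      obtain ⟨j', rfl⟩ : ∃ j', j = j' + 1 := ⟨j - 1, by omega⟩
      exact no_in_seed hf hh hx hxY _ (heq ▸ hstep j')
    | succ i ih =>
      intro j hj heq
      obtain ⟨j', rfl⟩ : ∃ j', j = j' + 1 := ⟨j - 1, by omega⟩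
      have := in_unique hf hh (hstep i) (heq ▸ hstep j')
      exact ih j' (by omega) this
  have : Fintype.card V < Fintype.card (Fin (Fintype.card V + 1)) := by simp
  obtain ⟨a, b, hab, heq⟩ := Fintype.exists_ne_map_eq_of_card_lt
    (fun n : Fin (Fintype.card V + 1) => F^[n.1] (seed h x)) this
  rcases Nat.lt_or_ge a.1 b.1 with hlt | hge
  · exact hinj a.1 b.1 hlt heq
  · have hne : a.1 ≠ b.1 := fun hc => hab (Fin.ext hc)
    exact hinj b.1 a.1 (by omega) heq.symm

end Core


section Core2

variable {V : Type*} [Fintype V] [DecidableEq V]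
variable {Adj : V → V → Prop} {B₀ : Finset V} {X Y : Finset V}
variable {f h : V → Option V} {Sf Sh : Set V} {x : V}

open Classical in
noncomputable def gA (f h : V → Option V) (Sf Sh : Set V) (x : V) : V → Option V :=
  fun v => if v ∈ Mset f h Sf Sh x then f v else h v

open Classical in
noncomputable def gB (f h : V → Option V) (Sf Sh : Set V) (x : V) : V → Option V :=
  fun v => if v ∈ Mset f h Sf Sh x then h v else f v

def InvA (f h : V → Option V) (Sf Sh : Set V) (x : V) (v : V) : Prop :=
  (v ∈ Mset f h Sf Sh x → v ∈ Sf) ∧ (v ∉ Mset f h Sf Sh x → v ∈ Sh)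

def InvB (f h : V → Option V) (Sf Sh : Set V) (x : V) (v : V) : Prop :=
  (v ∈ Mset f h Sf Sh x → v ∈ Sh) ∧ (v ∉ Mset f h Sf Sh x → v ∈ Sf)

lemma gA_of_mem {v : V} (hv : v ∈ Mset f h Sf Sh x) : gA f h Sf Sh x v = f v := by
  simp [gA, hv]

lemma gA_of_not_mem {v : V} (hv : v ∉ Mset f h Sf Sh x) : gA f h Sf Sh x v = h v := by
  simp [gA, hv]

lemma gB_of_mem {v : V} (hv : v ∈ Mset f h Sf Sh x) : gB f h Sf Sh x v = h v := by
  simp [gB, hv]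

lemma gB_of_not_mem {v : V} (hv : v ∉ Mset f h Sf Sh x) : gB f h Sf Sh x v = f v := by
  simp [gB, hv]

lemma gA_adj (hf : Route Adj B₀ X f Sf) (hh : Route Adj B₀ Y h Sh) :
    ∀ v u, gA f h Sf Sh x v = some u → Adj v u := by
  intro v u hvu
  by_cases hv : v ∈ Mset f h Sf Sh x
  · rw [gA_of_mem hv] at hvu; exact hf.adj v u hvu
  · rw [gA_of_not_mem hv] at hvu; exact hh.adj v u hvu

lemma gB_adj (hf : Route Adj B₀ X f Sf) (hh : Route Adj B₀ Y h Sh) :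
    ∀ v u, gB f h Sf Sh x v = some u → Adj v u := by
  intro v u hvu
  by_cases hv : v ∈ Mset f h Sf Sh x
  · rw [gB_of_mem hv] at hvu; exact hh.adj v u hvu
  · rw [gB_of_not_mem hv] at hvu; exact hf.adj v u hvu

lemma gA_inj (hf : Route Adj B₀ X f Sf) (hh : Route Adj B₀ Y h Sh) :
    ∀ v v' u, gA f h Sf Sh x v = some u → gA f h Sf Sh x v' = some u → v = v' := by
  intro v v' u h1 h2
  by_cases hv : v ∈ Mset f h Sf Sh x <;> by_cases hv' : v' ∈ Mset f h Sf Sh x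
  · rw [gA_of_mem hv] at h1; rw [gA_of_mem hv'] at h2
    exact hf.inj _ _ _ h1 h2
  · rw [gA_of_mem hv] at h1; rw [gA_of_not_mem hv'] at h2
    exact absurd (M_fwd hv (Or.inl ⟨u, h1, h2⟩)) hv'
  · rw [gA_of_not_mem hv] at h1; rw [gA_of_mem hv'] at h2
    exact absurd (M_fwd hv' (Or.inl ⟨u, h2, h1⟩)) hv
  · rw [gA_of_not_mem hv] at h1; rw [gA_of_not_mem hv'] at h2
    exact hh.inj _ _ _ h1 h2

lemma gB_inj (hf : Route Adj B₀ X f Sf) (hh : Route Adj B₀ Y h Sh)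
    (hx : x ∈ X) (hxY : x ∉ Y) :
    ∀ v v' u, gB f h Sf Sh x v = some u → gB f h Sf Sh x v' = some u → v = v' := by
  intro v v' u h1 h2
  by_cases hv : v ∈ Mset f h Sf Sh x <;> by_cases hv' : v' ∈ Mset f h Sf Sh x
  · rw [gB_of_mem hv] at h1; rw [gB_of_mem hv'] at h2
    exact hh.inj _ _ _ h1 h2
  · rw [gB_of_mem hv] at h1; rw [gB_of_not_mem hv'] at h2
    exact absurd (M_bwd hf hh hx hxY hv (Or.inl ⟨u, h2, h1⟩)) hv'
  · rw [gB_of_not_mem hv] at h1; rw [gB_of_mem hv'] at h2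
    exact absurd (M_bwd hf hh hx hxY hv' (Or.inl ⟨u, h1, h2⟩)) hv
  · rw [gB_of_not_mem hv] at h1; rw [gB_of_not_mem hv'] at h2
    exact hf.inj _ _ _ h1 h2

lemma invA_step (hf : Route Adj B₀ X f Sf) (hh : Route Adj B₀ Y h Sh) :
    ∀ v, InvA f h Sf Sh x v → ∀ u, gA f h Sf Sh x v = some u → InvA f h Sf Sh x u := by
  intro v hI u hvu
  by_cases hv : v ∈ Mset f h Sf Sh x
  · rw [gA_of_mem hv] at hvu
    have huSf : u ∈ Sf := img_mem hf hvu
    refine ⟨fun _ => huSf, fun huM => ?_⟩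
    by_contra huSh
    exact huM (M_fwd hv (Or.inr (Or.inl ⟨hvu, huSh⟩)))
  · rw [gA_of_not_mem hv] at hvu
    have huSh : u ∈ Sh := img_mem hh hvu
    refine ⟨fun huM => ?_, fun _ => huSh⟩
    by_contra huSf
    exact hv (M_fwd huM (Or.inr (Or.inr ⟨hvu, huSf⟩)))

lemma invA_term (hf : Route Adj B₀ X f Sf) (hh : Route Adj B₀ Y h Sh) :
    ∀ v, InvA f h Sf Sh x v → gA f h Sf Sh x v = none → v ∈ B₀ := by
  intro v hI hvn
  by_cases hv : v ∈ Mset f h Sf Sh x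
  · rw [gA_of_mem hv] at hvn; exact hf.sink v (hI.1 hv) hvn
  · rw [gA_of_not_mem hv] at hvn; exact hh.sink v (hI.2 hv) hvn

lemma invB_step (hf : Route Adj B₀ X f Sf) (hh : Route Adj B₀ Y h Sh)
    (hx : x ∈ X) (hxY : x ∉ Y) :
    ∀ v, InvB f h Sf Sh x v → ∀ u, gB f h Sf Sh x v = some u → InvB f h Sf Sh x u := by
  intro v hI u hvu
  by_cases hv : v ∈ Mset f h Sf Sh x
  · rw [gB_of_mem hv] at hvu
    have huSh : u ∈ Sh := img_mem hh hvu
    refine ⟨fun _ => huSh, fun huM => ?_⟩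
    by_contra huSf
    exact huM (M_bwd hf hh hx hxY hv (Or.inr (Or.inr ⟨hvu, huSf⟩)))
  · rw [gB_of_not_mem hv] at hvu
    have huSf : u ∈ Sf := img_mem hf hvu
    refine ⟨fun huM => ?_, fun _ => huSf⟩
    by_contra huSh
    exact hv (M_bwd hf hh hx hxY huM (Or.inr (Or.inl ⟨hvu, huSh⟩)))

lemma invB_term (hf : Route Adj B₀ X f Sf) (hh : Route Adj B₀ Y h Sh) :
    ∀ v, InvB f h Sf Sh x v → gB f h Sf Sh x v = none → v ∈ B₀ := by
  intro v hI hvn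
  by_cases hv : v ∈ Mset f h Sf Sh x
  · rw [gB_of_mem hv] at hvn; exact hh.sink v (hI.1 hv) hvn
  · rw [gB_of_not_mem hv] at hvn; exact hf.sink v (hI.2 hv) hvn

lemma gA_nimg_x (hf : Route Adj B₀ X f Sf) (hh : Route Adj B₀ Y h Sh)
    (hx : x ∈ X) (hxY : x ∉ Y) : ∀ v, gA f h Sf Sh x v ≠ some x := by
  intro v hvx
  by_cases hv : v ∈ Mset f h Sf Sh x
  · rw [gA_of_mem hv] at hvx
    exact hf.nimg x hx v hvx
  · rw [gA_of_not_mem hv] at hvx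
    have hc : ∃ w, h w = some x := ⟨v, hvx⟩
    have : v = seed h x := hh.inj _ _ _ hvx (seed_some hc)
    rw [this] at hv
    exact hv seed_mem

lemma invA_x (hf : Route Adj B₀ X f Sf) (hh : Route Adj B₀ Y h Sh)
    (hx : x ∈ X) (hxY : x ∉ Y) : InvA f h Sf Sh x x := by
  refine ⟨fun _ => hf.srcs x hx, fun hnot => ?_⟩
  by_cases hc : ∃ w, h w = some x
  · exact img_mem hh (seed_some hc)
  · exfalso
    apply hnot
    have hsx : seed h x = x := seed_none (h := h) hc
    have : seed h x ∈ Mset f h Sf Sh x := seed_mem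
    rwa [hsx] at this

lemma M_sub (hf : Route Adj B₀ X f Sf) (hh : Route Adj B₀ Y h Sh) (hx : x ∈ X) {v : V}
    (hv : v ∈ Mset f h Sf Sh x) : v ∈ Sf ∨ v ∈ Sh := by
  have hv' : Relation.ReflTransGen (EStep f h Sf Sh) (seed h x) v := hv
  induction hv' with
  | refl =>
    by_cases hc : ∃ w, h w = some x
    · exact Or.inr (dom_mem hh (seed_some hc))
    · rw [seed_none hc]; exact Or.inl (hf.srcs x hx)
  | @tail b c hab hstep ih =>
    rcases hstep with ⟨w, hfb, hhc⟩ | ⟨hfb, hnSh⟩ | ⟨hhc, hnSf⟩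
    · exact Or.inr (dom_mem hh hhc)
    · exact Or.inl (img_mem hf hfb)
    · exact Or.inr (dom_mem hh hhc)

lemma classify (hf : Route Adj B₀ X f Sf) (hh : Route Adj B₀ Y h Sh) (hx : x ∈ X) {w : V}
    (hwM : w ∈ Mset f h Sf Sh x) (hwD : DeadOut f h Sf Sh w) :
    (∃ y, f w = some y ∧ y ∈ Y) ∨ (w ∈ Y ∧ w ∉ Sf) ∨ (f w = none ∧ w ∈ Sf) := by
  cases hfw : f w with
  | some u =>
    left
    refine ⟨u, rfl, ?_⟩
    have huSh : u ∈ Sh := by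
      by_contra huSh
      exact hwD u (Or.inr (Or.inl ⟨hfw, huSh⟩))
    have huh : ¬ ∃ v, h v = some u := by
      rintro ⟨v, hv⟩
      exact hwD v (Or.inl ⟨u, hfw, hv⟩)
    rcases hh.orig u huSh with hY | himg
    · exact hY
    · exact absurd himg huh
  | none =>
    by_cases hwSf : w ∈ Sf
    · exact Or.inr (Or.inr ⟨rfl, hwSf⟩)
    · have hwSh : w ∈ Sh := (M_sub hf hh hx hwM).resolve_left hwSf
      have hwh : ¬ ∃ v, h v = some w := by
        rintro ⟨v, hv⟩
        exact hwD v (Or.inr (Or.inr ⟨hv, hwSf⟩))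
      rcases hh.orig w hwSh with hY | himg
      · exact Or.inr (Or.inl ⟨hY, hwSf⟩)
      · exact absurd himg hwh

lemma defectI_dead (hf : Route Adj B₀ X f Sf) (hh : Route Adj B₀ Y h Sh) {w y : V}
    (hfw : f w = some y) (hyY : y ∈ Y) : DeadOut f h Sf Sh w := by
  intro u hE
  rcases hE with ⟨w', hfw', hhu⟩ | ⟨hfw', hnSh⟩ | ⟨hhu, hnSf⟩
  · obtain rfl : y = w' := by rw [hfw] at hfw'; injection hfw'
    exact hh.nimg _ hyY u hhu
  · obtain rfl : y = u := by rw [hfw] at hfw'; injection hfw'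
    exact hnSh (hh.srcs _ hyY)
  · exact hnSf (dom_mem hf hfw)

lemma defectII_dead (hf : Route Adj B₀ X f Sf) (hh : Route Adj B₀ Y h Sh) {z : V}
    (hzY : z ∈ Y) (hzSf : z ∉ Sf) : DeadOut f h Sf Sh z := by
  intro u hE
  rcases hE with ⟨w', hfw', hhu⟩ | ⟨hfw', hnSh⟩ | ⟨hhu, hnSf⟩
  · exact hzSf (dom_mem hf hfw')
  · exact hzSf (dom_mem hf hfw')
  · exact hh.nimg _ hzY u hhu

lemma tail_unique (hf : Route Adj B₀ X f Sf) (hh : Route Adj B₀ Y h Sh)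
    (hx : x ∈ X) (hxY : x ∉ Y) {v : V}
    (hv : v ∈ Mset f h Sf Sh x) (hdi : ∀ u, ¬ EStep f h Sf Sh u v) : v = seed h x := by
  rcases Relation.ReflTransGen.cases_tail hv with heq | ⟨c, hc, hcv⟩
  · exact heq
  · exact absurd hcv (hdi c)

lemma zX_not_himg (hf : Route Adj B₀ X f Sf) (hh : Route Adj B₀ Y h Sh)
    (hx : x ∈ X) (hxY : x ∉ Y) {z : V} (hzX : z ∈ X) (hzx : z ≠ x) :
    ∀ v ∈ Mset f h Sf Sh x, h v ≠ some z := by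
  intro v hvM hvz
  have hdi : ∀ u, ¬ EStep f h Sf Sh u v := by
    intro u hE
    rcases hE with ⟨w', hfu, hhv⟩ | ⟨hfu, hnSh⟩ | ⟨hhv, hnSf⟩
    · obtain rfl : z = w' := by rw [hvz] at hhv; injection hhv
      exact hf.nimg _ hzX u hfu
    · exact hnSh (hh.dom v (by simp [hvz]))
    · obtain rfl : z = u := by rw [hvz] at hhv; injection hhv
      exact hnSf (hf.srcs _ hzX)
  have hvs : v = seed h x := tail_unique hf hh hx hxY hvM hdi
  by_cases hc : ∃ w, h w = some x
  · have := seed_some (h := h) (x := x) hc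
    rw [← hvs] at this
    rw [hvz] at this
    have : z = x := by injection this
    exact hzx this
  · rw [seed_none hc] at hvs
    subst hvs
    exact x_not_Sh hh hxY hc (hh.dom v (by simp [hvz]))

lemma zX_M_Sh (hf : Route Adj B₀ X f Sf) (hh : Route Adj B₀ Y h Sh)
    (hx : x ∈ X) (hxY : x ∉ Y) {z : V} (hzX : z ∈ X) (hzx : z ≠ x)
    (hzM : z ∈ Mset f h Sf Sh x) : z ∈ Sh := by
  by_contra hzSh
  have hzn : h z = none := not_mem_dom hh hzSh
  have hdi : ∀ u, ¬ EStep f h Sf Sh u z := by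
    intro u hE
    rcases hE with ⟨w', hfu, hhv⟩ | ⟨hfu, hnSh⟩ | ⟨hhv, hnSf⟩
    · rw [hzn] at hhv; cases hhv
    · exact hf.nimg _ hzX u hfu
    · rw [hzn] at hhv; cases hhv
  have hzs : z = seed h x := tail_unique hf hh hx hxY hzM hdi
  by_cases hc : ∃ w, h w = some x
  · exact hzSh (hzs ▸ dom_mem hh (seed_some hc))
  · rw [seed_none hc] at hzs
    exact hzx hzs

end Core2


section Core3

variable {V : Type*} [Fintype V] [DecidableEq V]
variable {Adj : V → V → Prop} {B₀ : Finset V} {X Y : Finset V}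
variable {f h : V → Option V} {Sf Sh : Set V} {x : V}

/-- The core exchange lemma: either `Y ∪ {x}` is linked (augmenting case), or there
is a `y ∈ Y \ X` such that both exchanged sets are linked. -/
lemma core (hf : Route Adj B₀ X f Sf) (hh : Route Adj B₀ Y h Sh)
    (hx : x ∈ X) (hxY : x ∉ Y) :
    Linked Adj ↑B₀ ↑(insert x Y) ∨
    ∃ y, DefSpec f h Sf Sh Y x y ∧ y ∈ Y ∧ y ∉ X ∧
      Linked Adj ↑B₀ ↑(insert x (Y.erase y)) ∧ Linked Adj ↑B₀ ↑(insert y (X.erase x)) := by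
  classical
  obtain ⟨w, hwM, hwD⟩ := head_ex hf hh hx hxY
  -- facts shared by both defect cases
  have hBside : ∀ y : V, ((∃ w', w' ∈ Mset f h Sf Sh x ∧ f w' = some y) ∨
      (y ∈ Mset f h Sf Sh x ∧ y ∉ Sf)) → y ∈ Y → y ∉ X →
      Linked Adj ↑B₀ ↑(insert y (X.erase x)) := by
    intro y hcase hyY hyX
    apply linked_of_fun Adj B₀ _ (gB f h Sf Sh x) (InvB f h Sf Sh x)
      (gB_adj hf hh) (gB_inj hf hh hx hxY) (invB_step hf hh hx hxY) (invB_term hf hh)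
    intro z hz
    rcases Finset.mem_insert.1 hz with rfl | hzE
    · -- z = y
      refine ⟨⟨fun _ => hh.srcs _ hyY, fun hnM => ?_⟩, ?_⟩
      · rcases hcase with ⟨w', hw'M, hfw'⟩ | ⟨hyM, _⟩
        · exact img_mem hf hfw'
        · exact absurd hyM hnM
      · intro v hv
        by_cases hvM : v ∈ Mset f h Sf Sh x
        · rw [gB_of_mem hvM] at hv
          exact hh.nimg _ hyY v hv
        · rw [gB_of_not_mem hvM] at hv
          rcases hcase with ⟨w', hw'M, hfw'⟩ | ⟨_, hySf⟩
          · exact hvM ((hf.inj _ _ _ hv hfw') ▸ hw'M)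
          · exact hySf (img_mem hf hv)
    · -- z ∈ X.erase x
      have hzx : z ≠ x := (Finset.mem_erase.1 hzE).1
      have hzX : z ∈ X := (Finset.mem_erase.1 hzE).2
      refine ⟨⟨zX_M_Sh hf hh hx hxY hzX hzx, fun _ => hf.srcs _ hzX⟩, ?_⟩
      intro v hv
      by_cases hvM : v ∈ Mset f h Sf Sh x
      · rw [gB_of_mem hvM] at hv
        exact zX_not_himg hf hh hx hxY hzX hzx v hvM hv
      · rw [gB_of_not_mem hvM] at hv
        exact hf.nimg _ hzX v hv
  have hAside : ∀ (T : Finset V), x ∈ T →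
      (∀ z ∈ T, z ≠ x → z ∈ Y ∧ (∀ w' ∈ Mset f h Sf Sh x, f w' ≠ some z) ∧
        (z ∈ Mset f h Sf Sh x → z ∈ Sf)) →
      Linked Adj ↑B₀ ↑T := by
    intro T hxT hT
    apply linked_of_fun Adj B₀ _ (gA f h Sf Sh x) (InvA f h Sf Sh x)
      (gA_adj hf hh) (gA_inj hf hh) (invA_step hf hh) (invA_term hf hh)
    intro z hz
    by_cases hzx : z = x
    · subst hzx
      exact ⟨invA_x hf hh hx hxY, gA_nimg_x hf hh hx hxY⟩
    · obtain ⟨hzY, hnf, hzSf⟩ := hT z hz hzx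
      refine ⟨⟨hzSf, fun _ => hh.srcs _ hzY⟩, ?_⟩
      intro v hv
      by_cases hvM : v ∈ Mset f h Sf Sh x
      · rw [gA_of_mem hvM] at hv
        exact hnf v hvM hv
      · rw [gA_of_not_mem hvM] at hv
        exact hh.nimg _ hzY v hv
  rcases classify hf hh hx hwM hwD with ⟨y, hfwy, hyY⟩ | ⟨hwY, hwSf⟩ | ⟨hfw, hwSf⟩
  · -- defect case (i)
    right
    have hyX : y ∉ X := fun hyX => hf.nimg y hyX w hfwy
    refine ⟨y, ⟨w, hwM, Or.inl ⟨hfwy, hyY⟩⟩, hyY, hyX, ?_, ?_⟩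
    · apply hAside _ (Finset.mem_insert_self x _)
      intro z hz hzx
      rcases Finset.mem_insert.1 hz with rfl | hzE
      · exact absurd rfl hzx
      · have hzY : z ∈ Y := Finset.mem_of_mem_erase hzE
        have hzy : z ≠ y := (Finset.mem_erase.1 hzE).1
        refine ⟨hzY, ?_, ?_⟩
        · intro w' hw'M hfw'
          have hdead := defectI_dead hf hh hfw' hzY
          have : w' = w := head_unique hf hh hw'M hwM hdead hwD
          rw [this, hfwy] at hfw'
          exact hzy (by injection hfw'.symm)
        · intro hzM
          by_contra hzSf
          have hdead := defectII_dead hf hh hzY hzSf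
          have : z = w := head_unique hf hh hzM hwM hdead hwD
          exact hzSf (this ▸ dom_mem hf hfwy)
    · exact hBside y (Or.inl ⟨w, hwM, hfwy⟩) hyY hyX
  · -- defect case (ii) : y = w
    right
    have hyX : w ∉ X := fun hyX => hwSf (hf.srcs _ hyX)
    refine ⟨w, ⟨w, hwM, Or.inr ⟨rfl, hwY, hwSf⟩⟩, hwY, hyX, ?_, ?_⟩
    · apply hAside _ (Finset.mem_insert_self x _)
      intro z hz hzx
      rcases Finset.mem_insert.1 hz with rfl | hzE
      · exact absurd rfl hzx
      · have hzY : z ∈ Y := Finset.mem_of_mem_erase hzE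
        have hzy : z ≠ w := (Finset.mem_erase.1 hzE).1
        refine ⟨hzY, ?_, ?_⟩
        · intro w' hw'M hfw'
          have hdead := defectI_dead hf hh hfw' hzY
          have hww : w' = w := head_unique hf hh hw'M hwM hdead hwD
          rw [hww] at hfw'
          exact hwSf (dom_mem hf hfw')
        · intro hzM
          by_contra hzSf
          have hdead := defectII_dead hf hh hzY hzSf
          exact hzy (head_unique hf hh hzM hwM hdead hwD)
    · exact hBside w (Or.inr ⟨hwM, hwSf⟩) hwY hyX
  · -- augmenting case
    left
    apply hAside _ (Finset.mem_insert_self x _)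
    intro z hz hzx
    rcases Finset.mem_insert.1 hz with rfl | hzY
    · exact absurd rfl hzx
    · refine ⟨hzY, ?_, ?_⟩
      · intro w' hw'M hfw'
        have hdead := defectI_dead hf hh hfw' hzY
        have : w' = w := head_unique hf hh hw'M hwM hdead hwD
        rw [this, hfw] at hfw'
        cases hfw'
      · intro hzM
        by_contra hzSf
        have hdead := defectII_dead hf hh hzY hzSf
        have : z = w := head_unique hf hh hzM hwM hdead hwD
        exact hzSf (this ▸ hwSf)

lemma seed_inj (hf : Route Adj B₀ X f Sf) (hh : Route Adj B₀ Y h Sh) {x₁ x₂ : V}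
    (hx₁ : x₁ ∈ X) (hx₁Y : x₁ ∉ Y) (hx₂ : x₂ ∈ X) (hx₂Y : x₂ ∉ Y)
    (hs : seed h x₁ = seed h x₂) : x₁ = x₂ := by
  by_cases hc₁ : ∃ w, h w = some x₁ <;> by_cases hc₂ : ∃ w, h w = some x₂
  · have h1 := seed_some (h := h) hc₁
    have h2 := seed_some (h := h) hc₂
    rw [hs] at h1
    rw [h1] at h2
    injection h2
  · have h1 := seed_some (h := h) hc₁
    rw [hs, seed_none hc₂] at h1
    exact absurd (hh.dom _ (by simp [h1])) (x_not_Sh hh hx₂Y hc₂)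
  · have h2 := seed_some (h := h) hc₂
    rw [← hs, seed_none hc₁] at h2
    exact absurd (hh.dom _ (by simp [h2])) (x_not_Sh hh hx₁Y hc₁)
  · rw [seed_none hc₁, seed_none hc₂] at hs
    exact hs

lemma defspec_inj (hf : Route Adj B₀ X f Sf) (hh : Route Adj B₀ Y h Sh) {x₁ x₂ y : V}
    (hx₁ : x₁ ∈ X) (hx₁Y : x₁ ∉ Y) (hx₂ : x₂ ∈ X) (hx₂Y : x₂ ∉ Y)
    (h1 : DefSpec f h Sf Sh Y x₁ y) (h2 : DefSpec f h Sf Sh Y x₂ y) : x₁ = x₂ := by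
  obtain ⟨w₁, hw₁M, hc₁⟩ := h1
  obtain ⟨w₂, hw₂M, hc₂⟩ := h2
  have hw12 : w₁ = w₂ := by
    rcases hc₁ with ⟨hf1, hy1⟩ | ⟨rfl, hy1, hS1⟩ <;> rcases hc₂ with ⟨hf2, hy2⟩ | ⟨he2, hy2, hS2⟩
    · exact hf.inj _ _ _ hf1 hf2
    · subst he2; exact absurd (img_mem hf hf1) hS2
    · exact absurd (img_mem hf hf2) hS1
    · rw [he2]
  subst hw12
  have hr1 : Relation.ReflTransGen (EStep f h Sf Sh) (seed h x₁) w₁ := hw₁M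
  have hr2 : Relation.ReflTransGen (EStep f h Sf Sh) (seed h x₂) w₁ := hw₂M
  have := rev2 (r := EStep f h Sf Sh) (fun a b c hac hbc => in_unique hf hh hac hbc) hr1 hr2
  rcases this with hr | hr
  · rcases Relation.ReflTransGen.cases_tail hr with heq | ⟨c, _, hcs⟩
    · exact seed_inj hf hh hx₁ hx₁Y hx₂ hx₂Y heq.symm
    · exact absurd hcs (no_in_seed hf hh hx₂ hx₂Y c)
  · rcases Relation.ReflTransGen.cases_tail hr with heq | ⟨c, _, hcs⟩
    · exact seed_inj hf hh hx₁ hx₁Y hx₂ hx₂Y heq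
    · exact absurd hcs (no_in_seed hf hh hx₁ hx₁Y c)

end Core3


section Final

variable {V : Type*} [Fintype V] [DecidableEq V]
variable {Adj : V → V → Prop} {B₀ E₀ : Finset V}

def IndS (Adj : V → V → Prop) (B₀ E₀ : Finset V) (B : Finset V) : Prop :=
  B ⊆ E₀ ∧ Linked Adj ↑B₀ ↑B

def IsBase (Adj : V → V → Prop) (B₀ E₀ : Finset V) (B : Finset V) : Prop :=
  IndS Adj B₀ E₀ B ∧ ∀ B', IndS Adj B₀ E₀ B' → B ⊆ B' → B = B'

lemma ext_max_aux :
    ∀ n (T : Finset V), E₀.card - T.card ≤ n → IndS Adj B₀ E₀ T →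
      ∃ B, IsBase Adj B₀ E₀ B ∧ T ⊆ B := by
  intro n
  induction n with
  | zero =>
    intro T hn hT
    have hTE : T = E₀ := Finset.eq_of_subset_of_card_le hT.1 (by omega)
    refine ⟨T, ⟨hT, ?_⟩, subset_rfl⟩
    intro B' hB' hTB'
    exact subset_antisymm hTB' (hTE ▸ hB'.1)
  | succ n ih =>
    intro T hn hT
    by_cases hmax : ∀ B', IndS Adj B₀ E₀ B' → T ⊆ B' → T = B'
    · exact ⟨T, ⟨hT, hmax⟩, subset_rfl⟩
    · push_neg at hmax
      obtain ⟨B', hB', hTB', hne⟩ := hmax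
      have hlt : T.card < B'.card := Finset.card_lt_card (hTB'.ssubset_of_ne hne)
      have hcard : B'.card ≤ E₀.card := Finset.card_le_card hB'.1
      obtain ⟨B, hB, hsub⟩ := ih B' (by omega) hB'
      exact ⟨B, hB, hTB'.trans hsub⟩

lemma ext_max {T : Finset V} (hT : IndS Adj B₀ E₀ T) :
    ∃ B, IsBase Adj B₀ E₀ B ∧ T ⊆ B :=
  ext_max_aux (E₀.card - T.card) T le_rfl hT

lemma card_diff_le {X Y : Finset V} {f h : V → Option V} {Sf Sh : Set V}
    (hX : IsBase Adj B₀ E₀ X) (hY : IsBase Adj B₀ E₀ Y)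
    (hf : Route Adj B₀ X f Sf) (hh : Route Adj B₀ Y h Sh) :
    (X \ Y).card ≤ (Y \ X).card := by
  classical
  have hcore : ∀ x ∈ X \ Y, ∃ y, DefSpec f h Sf Sh Y x y ∧ y ∈ Y ∧ y ∉ X := by
    intro x hx
    have hxX : x ∈ X := (Finset.mem_sdiff.1 hx).1
    have hxY : x ∉ Y := (Finset.mem_sdiff.1 hx).2
    rcases core hf hh hxX hxY with haug | ⟨y, hspec, hyY, hyX, _, _⟩
    · exfalso
      have hins : IndS Adj B₀ E₀ (insert x Y) :=
        ⟨Finset.insert_subset (hX.1.1 hxX) hY.1.1, haug⟩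
      have := hY.2 (insert x Y) hins (Finset.subset_insert _ _)
      exact hxY (this ▸ Finset.mem_insert_self x Y)
    · exact ⟨y, hspec, hyY, hyX⟩
  choose yf hspec hyY hyX using hcore
  set F : V → V := fun v => if hv : v ∈ X \ Y then yf v hv else v with hF
  apply Finset.card_le_card_of_injOn F
  · intro a ha
    have ha' : a ∈ X \ Y := by exact_mod_cast ha
    simp only [hF, dif_pos ha']
    exact_mod_cast Finset.mem_sdiff.2 ⟨hyY a ha', hyX a ha'⟩
  · intro a ha b hb hab
    have ha' : a ∈ X \ Y := by exact_mod_cast ha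
    have hb' : b ∈ X \ Y := by exact_mod_cast hb
    simp only [hF, dif_pos ha', dif_pos hb'] at hab
    exact defspec_inj hf hh (Finset.mem_sdiff.1 ha').1 (Finset.mem_sdiff.1 ha').2
      (Finset.mem_sdiff.1 hb').1 (Finset.mem_sdiff.1 hb').2
      (hab ▸ hspec a ha') (hspec b hb')

lemma base_card_eq {X Y : Finset V}
    (hX : IsBase Adj B₀ E₀ X) (hY : IsBase Adj B₀ E₀ Y) : X.card = Y.card := by
  obtain ⟨f, Sf, hf⟩ := route_of_linked hX.1.2
  obtain ⟨h, Sh, hh⟩ := route_of_linked hY.1.2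
  have h1 := card_diff_le hX hY hf hh
  have h2 := card_diff_le hY hX hh hf
  have e1 := Finset.card_inter_add_card_sdiff X Y
  have e2 := Finset.card_inter_add_card_sdiff Y X
  rw [Finset.inter_comm] at e2
  omega

lemma max_of_card {X T : Finset V} (hX : IsBase Adj B₀ E₀ X)
    (hT : IndS Adj B₀ E₀ T) (hc : T.card = X.card) : IsBase Adj B₀ E₀ T := by
  refine ⟨hT, ?_⟩
  intro B' hB' hTB'
  obtain ⟨B, hB, hB'B⟩ := ext_max hB'
  have hBc : B.card = X.card := base_card_eq hB hX
  have hTB : T ⊆ B := hTB'.trans hB'B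
  have hTBeq : T = B := Finset.eq_of_subset_of_card_le hTB (by omega)
  exact subset_antisymm hTB' (hTBeq ▸ hB'B)

end Final

end Stmt8

/-- Every gammoid (the restriction of a strict gammoid `L(G, B₀)` to a subset `E₀`
of the vertices; its bases are the maximal independent sets) is base-orderable. -/
theorem stmt8 {V : Type*} [Fintype V] [DecidableEq V] (Adj : V → V → Prop)
    (B₀ E₀ : Finset V) :
    BaseOrderable (fun B : Finset V =>
      (B ⊆ E₀ ∧ Linked Adj ↑B₀ ↑B) ∧
      ∀ B' : Finset V, (B' ⊆ E₀ ∧ Linked Adj ↑B₀ ↑B') → B ⊆ B' → B = B') := by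
  classical
  intro B₁ B₂ h₁ h₂
  have hb₁ : Stmt8.IsBase Adj B₀ E₀ B₁ := h₁
  have hb₂ : Stmt8.IsBase Adj B₀ E₀ B₂ := h₂
  obtain ⟨p, Sp, hp⟩ := Stmt8.route_of_linked hb₁.1.2
  obtain ⟨q, Sq, hq⟩ := Stmt8.route_of_linked hb₂.1.2
  have hcore : ∀ x ∈ B₁ \ B₂, ∃ y, Stmt8.DefSpec p q Sp Sq B₂ x y ∧ y ∈ B₂ ∧ y ∉ B₁ ∧
      Linked Adj ↑B₀ ↑(insert x (B₂.erase y)) ∧ Linked Adj ↑B₀ ↑(insert y (B₁.erase x)) := by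
    intro x hx
    have hxX : x ∈ B₁ := (Finset.mem_sdiff.1 hx).1
    have hxY : x ∉ B₂ := (Finset.mem_sdiff.1 hx).2
    rcases Stmt8.core hp hq hxX hxY with haug | ⟨y, hspec, hyY, hyX, hA, hB⟩
    · exfalso
      have hins : Stmt8.IndS Adj B₀ E₀ (insert x B₂) :=
        ⟨Finset.insert_subset (hb₁.1.1 hxX) hb₂.1.1, haug⟩
      have := hb₂.2 (insert x B₂) hins (Finset.subset_insert _ _)
      exact hxY (this ▸ Finset.mem_insert_self x B₂)
    · exact ⟨y, hspec, hyY, hyX, hA, hB⟩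
  choose yf hspec hyY hyX hLA hLB using hcore
  set π : V → V := fun v => if hv : v ∈ B₁ \ B₂ then yf v hv else v with hπ
  have hπ_in : ∀ v (hv : v ∈ B₁ \ B₂), π v = yf v hv := by
    intro v hv; simp only [hπ, dif_pos hv]
  have hπ_out : ∀ v, v ∉ B₁ \ B₂ → π v = v := by
    intro v hv; simp only [hπ, dif_neg hv]
  have hmaps : ∀ a ∈ B₁ \ B₂, π a ∈ B₂ \ B₁ := by
    intro a ha
    rw [hπ_in a ha]
    exact Finset.mem_sdiff.2 ⟨hyY a ha, hyX a ha⟩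
  have hinjd : ∀ a ∈ B₁ \ B₂, ∀ b ∈ B₁ \ B₂, π a = π b → a = b := by
    intro a ha b hb hab
    rw [hπ_in a ha, hπ_in b hb] at hab
    exact Stmt8.defspec_inj hp hq (Finset.mem_sdiff.1 ha).1 (Finset.mem_sdiff.1 ha).2
      (Finset.mem_sdiff.1 hb).1 (Finset.mem_sdiff.1 hb).2 (hab ▸ hspec a ha) (hspec b hb)
  -- cardinalities
  have hcards : (B₁ \ B₂).card = (B₂ \ B₁).card := by
    have hc := Stmt8.base_card_eq hb₁ hb₂
    have e1 := Finset.card_inter_add_card_sdiff B₁ B₂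
    have e2 := Finset.card_inter_add_card_sdiff B₂ B₁
    rw [Finset.inter_comm] at e2
    omega
  have himg : (B₁ \ B₂).image π = B₂ \ B₁ := by
    apply Finset.eq_of_subset_of_card_le
    · intro v hv
      obtain ⟨a, ha, rfl⟩ := Finset.mem_image.1 hv
      exact hmaps a ha
    · rw [Finset.card_image_of_injOn (fun a ha b hb => hinjd a (by exact_mod_cast ha) b
        (by exact_mod_cast hb))]
      omega
  refine ⟨π, ⟨?_, ?_, ?_⟩, ?_⟩
  · -- MapsTo
    intro v hv
    have hvB : v ∈ B₁ := by exact_mod_cast hv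
    by_cases hvd : v ∈ B₁ \ B₂
    · exact_mod_cast Finset.mem_sdiff.1 (hmaps v hvd) |>.1
    · have hvB₂ : v ∈ B₂ := by
        by_contra hc
        exact hvd (Finset.mem_sdiff.2 ⟨hvB, hc⟩)
      rw [hπ_out v hvd]
      exact_mod_cast hvB₂
  · -- InjOn
    intro a ha b hb hab
    have haB : a ∈ B₁ := by exact_mod_cast ha
    have hbB : b ∈ B₁ := by exact_mod_cast hb
    by_cases had : a ∈ B₁ \ B₂ <;> by_cases hbd : b ∈ B₁ \ B₂
    · exact hinjd a had b hbd hab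
    · exfalso
      have h1 := hmaps a had
      rw [hab, hπ_out b hbd] at h1
      exact (Finset.mem_sdiff.1 h1).2 hbB
    · exfalso
      have h1 := hmaps b hbd
      rw [← hab, hπ_out a had] at h1
      exact (Finset.mem_sdiff.1 h1).2 haB
    · rw [hπ_out a had, hπ_out b hbd] at hab
      exact hab
  · -- SurjOn
    intro v hv
    have hvB : v ∈ B₂ := by exact_mod_cast hv
    by_cases hvd : v ∈ B₂ \ B₁
    · rw [← himg] at hvd
      obtain ⟨a, ha, rfl⟩ := Finset.mem_image.1 hvd
      exact ⟨a, by exact_mod_cast (Finset.mem_sdiff.1 ha).1, rfl⟩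
    · have hvB₁ : v ∈ B₁ := by
        by_contra hc
        exact hvd (Finset.mem_sdiff.2 ⟨hvB, hc⟩)
      refine ⟨v, by exact_mod_cast hvB₁, ?_⟩
      apply hπ_out
      intro hc
      exact (Finset.mem_sdiff.1 hc).2 hvB
  · -- exchange property
    intro x hx
    by_cases hxd : x ∈ B₁ \ B₂
    · have hxB₂ : x ∉ B₂ := (Finset.mem_sdiff.1 hxd).2
      have hyB₂ : yf x hxd ∈ B₂ := hyY x hxd
      have hyB₁ : yf x hxd ∉ B₁ := hyX x hxd
      rw [hπ_in x hxd]
      constructor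
      · -- insert y (B₁.erase x) is a base
        have hind : Stmt8.IndS Adj B₀ E₀ (insert (yf x hxd) (B₁.erase x)) := by
          refine ⟨?_, hLB x hxd⟩
          exact Finset.insert_subset (hb₂.1.1 hyB₂)
            ((Finset.erase_subset _ _).trans hb₁.1.1)
        have hcard : (insert (yf x hxd) (B₁.erase x)).card = B₁.card := by
          rw [Finset.card_insert_of_notMem (fun hc => hyB₁ (Finset.mem_of_mem_erase hc)),
            Finset.card_erase_of_mem hx]
          have : 0 < B₁.card := Finset.card_pos.2 ⟨x, hx⟩
          omega
        exact Stmt8.max_of_card hb₁ hind hcard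
      · -- insert x (B₂.erase y) is a base
        have hind : Stmt8.IndS Adj B₀ E₀ (insert x (B₂.erase (yf x hxd))) := by
          refine ⟨?_, hLA x hxd⟩
          exact Finset.insert_subset (hb₁.1.1 hx)
            ((Finset.erase_subset _ _).trans hb₂.1.1)
        have hcard : (insert x (B₂.erase (yf x hxd))).card = B₂.card := by
          rw [Finset.card_insert_of_notMem (fun hc => hxB₂ (Finset.mem_of_mem_erase hc)),
            Finset.card_erase_of_mem hyB₂]
          have : 0 < B₂.card := Finset.card_pos.2 ⟨_, hyB₂⟩
          omega
        exact Stmt8.max_of_card hb₂ hind hcard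
    · have hxB₂ : x ∈ B₂ := by
        by_contra hc
        exact hxd (Finset.mem_sdiff.2 ⟨hx, hc⟩)
      rw [hπ_out x hxd]
      constructor
      · rw [Finset.insert_erase hx]
        exact h₁
      · rw [Finset.insert_erase hxB₂]
        exact h₂
end
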